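/- arXiv:2006.13689 — 7 statements merged into one kernel-verified Lean document; each statement's English description precedes it below -/
import Mathlib

section
/- Let x : [0,T] → ℝ^d be continuous, let b : ℝ^d → ℝ^d satisfy a one-sided Lipschitz condition with constant C_b and be locally Lipschitz continuous with modulus Υ_b, and let ξ ∈ ℝ^d. Then there exists a unique continuous z : [0,T] → ℝ^d satisfying z(t) = ξ + ∫₀ᵗ b(z(s) + x(s)) ds for all t ∈ [0,T]. Moreover, sup_{t∈[0,T]} |z(t)| ≤ r_z, where r_z := e^{C_b T} |ξ| + ∫₀^T e^{C_b(T−s)} |b(x(s))| ds, and z is Lipschitz continuous on [0,T] with Lipschitz constant at most r_z · Υ_b(r_z + sup_{t∈[0,T]} |x(t)|) + sup_{t∈[0,T]} |b(x(t))|. -/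
open scoped RealInnerProductSpace

open Set

variable {E : Type*} [NormedAddCommGroup E] [NormedSpace ℝ E]

/-- radial projection onto the closed ball of radius `r`. -/
noncomputable def getoProj (r : ℝ) (v : E) : E :=
  if ‖v‖ ≤ r then v else (r / ‖v‖) • v

lemma getoProj_of_le {r : ℝ} {v : E} (h : ‖v‖ ≤ r) : getoProj r v = v := if_pos h

lemma getoProj_norm_le {r : ℝ} (hr : 0 ≤ r) (v : E) : ‖getoProj r v‖ ≤ r := by
  unfold getoProj
  split_ifs with h
  · exact h
  · push_neg at h
    have hv : (0:ℝ) < ‖v‖ := lt_of_le_of_lt hr h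
    rw [norm_smul, Real.norm_eq_abs, abs_of_nonneg (div_nonneg hr hv.le),
      div_mul_cancel₀ _ hv.ne']

private lemma getoProj_lip_aux {r : ℝ} (hr : 0 ≤ r) {v w : E} (hvw : ‖w‖ ≤ ‖v‖) :
    ‖getoProj r v - getoProj r w‖ ≤ 2 * ‖v - w‖ := by
  by_cases h1 : ‖v‖ ≤ r
  · rw [getoProj_of_le h1, getoProj_of_le (hvw.trans h1)]
    linarith [norm_nonneg (v - w)]
  push_neg at h1
  have hv : (0:ℝ) < ‖v‖ := lt_of_le_of_lt hr h1
  have hAB : ‖v‖ - ‖w‖ ≤ ‖v - w‖ := norm_sub_norm_le v w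
  by_cases h2 : ‖w‖ ≤ r
  · rw [getoProj_of_le h2]
    unfold getoProj
    rw [if_neg (not_le.mpr h1)]
    have key : ‖(r / ‖v‖) • v - v‖ = ‖v‖ - r := by
      have : (r / ‖v‖) • v - v = (r / ‖v‖ - 1) • v := by rw [sub_smul, one_smul]
      rw [this, norm_smul, Real.norm_eq_abs, abs_of_nonpos (by
        rw [sub_nonpos, div_le_one hv]; exact h1.le), neg_sub, sub_mul, one_mul,
        div_mul_cancel₀ _ hv.ne']
    calc ‖(r / ‖v‖) • v - w‖ = ‖((r / ‖v‖) • v - v) + (v - w)‖ := by abel_nf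
      _ ≤ ‖(r / ‖v‖) • v - v‖ + ‖v - w‖ := norm_add_le _ _
      _ = (‖v‖ - r) + ‖v - w‖ := by rw [key]
      _ ≤ 2 * ‖v - w‖ := by linarith
  push_neg at h2
  have hw : (0:ℝ) < ‖w‖ := lt_of_le_of_lt hr h2
  unfold getoProj
  rw [if_neg (not_le.mpr h1), if_neg (not_le.mpr h2)]
  have split : (r / ‖v‖) • v - (r / ‖w‖) • w
      = (r / ‖v‖) • (v - w) + (r / ‖v‖ - r / ‖w‖) • w := by
    rw [smul_sub, sub_smul]; abel
  have hq1 : r / ‖v‖ ≤ 1 := (div_le_one hv).mpr h1.le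
  have hq0 : 0 ≤ r / ‖v‖ := div_nonneg hr hv.le
  have hq2 : r / ‖v‖ ≤ r / ‖w‖ := by gcongr
  calc ‖(r / ‖v‖) • v - (r / ‖w‖) • w‖
      ≤ ‖(r / ‖v‖) • (v - w)‖ + ‖(r / ‖v‖ - r / ‖w‖) • w‖ := by rw [split]; exact norm_add_le _ _
    _ = (r / ‖v‖) * ‖v - w‖ + (r / ‖w‖ - r / ‖v‖) * ‖w‖ := by
        rw [norm_smul, norm_smul, Real.norm_eq_abs, Real.norm_eq_abs,
          abs_of_nonneg hq0, abs_of_nonpos (by linarith), neg_sub]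
    _ ≤ 2 * ‖v - w‖ := by
        have e1 : (r / ‖v‖) * ‖v - w‖ ≤ 1 * ‖v - w‖ := by
          apply mul_le_mul_of_nonneg_right hq1 (norm_nonneg _)
        have e2 : (r / ‖w‖ - r / ‖v‖) * ‖w‖ ≤ ‖v‖ - ‖w‖ := by
          rw [sub_mul, div_mul_cancel₀ _ hw.ne']
          have : r / ‖v‖ * ‖w‖ = r * ‖w‖ / ‖v‖ := by ring
          rw [this]
          have h4 : r - (‖v‖ - ‖w‖) ≤ r * ‖w‖ / ‖v‖ := by
            rw [le_div_iff₀ hv]; nlinarith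
          linarith
        linarith

lemma getoProj_lip {r : ℝ} (hr : 0 ≤ r) (v w : E) :
    ‖getoProj r v - getoProj r w‖ ≤ 2 * ‖v - w‖ := by
  rcases le_total ‖w‖ ‖v‖ with h | h
  · exact getoProj_lip_aux hr h
  · rw [norm_sub_rev, norm_sub_rev v w]; exact getoProj_lip_aux hr h

lemma getoProj_continuous {r : ℝ} (hr : 0 ≤ r) : Continuous (getoProj (E := E) r) := by
  apply LipschitzWith.continuous (K := 2)
  apply LipschitzWith.of_dist_le_mul
  intro v w
  rw [dist_eq_norm, dist_eq_norm]
  simpa using getoProj_lip hr v w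

variable {F : Type*} [NormedAddCommGroup F] [InnerProductSpace ℝ F]

lemma getoProj_inner_key {r C : ℝ} (hr : 0 ≤ r) (hC : 0 ≤ C) {b : F → F}
    (hb : ∀ ς ζ : F, ⟪b ς - b ζ, ς - ζ⟫ ≤ C * ‖ς - ζ‖ ^ 2) (y u : F) :
    ⟪b (getoProj r y + u) - b u, y⟫ ≤ C * ‖y‖ ^ 2 := by
  by_cases h1 : ‖y‖ ≤ r
  · rw [getoProj_of_le h1]
    have := hb (y + u) u
    simpa [add_sub_cancel_right] using this
  push_neg at h1
  have hy : (0:ℝ) < ‖y‖ := lt_of_le_of_lt hr h1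
  rcases eq_or_lt_of_le hr with hr0 | hr0
  · have hP0 : getoProj r y = 0 := by
      unfold getoProj; rw [if_neg (not_le.mpr h1), ← hr0]; simp
    rw [hP0, zero_add, sub_self, inner_zero_left]
    positivity
  · have hP : getoProj r y = (r / ‖y‖) • y := by
      unfold getoProj; rw [if_neg (not_le.mpr h1)]
    have hnP : ‖getoProj r y‖ = r := by
      rw [hP, norm_smul, Real.norm_eq_abs, abs_of_nonneg (div_nonneg hr hy.le),
        div_mul_cancel₀ _ hy.ne']
    have hosl := hb (getoProj r y + u) u
    rw [add_sub_cancel_right] at hosl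
    have hinner : ∀ v : F, ⟪v, y⟫ = (‖y‖ / r) * ⟪v, getoProj r y⟫ := by
      intro v
      rw [hP, real_inner_smul_right, ← mul_assoc,
        show ‖y‖ / r * (r / ‖y‖) = 1 by field_simp, one_mul]
    calc ⟪b (getoProj r y + u) - b u, y⟫
        = (‖y‖ / r) * ⟪b (getoProj r y + u) - b u, getoProj r y⟫ := hinner _
      _ ≤ (‖y‖ / r) * (C * ‖getoProj r y‖ ^ 2) :=
          mul_le_mul_of_nonneg_left hosl (div_nonneg hy.le hr)
      _ = C * r * ‖y‖ := by rw [hnP]; field_simp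
      _ ≤ C * ‖y‖ ^ 2 := by nlinarith [mul_le_mul_of_nonneg_left h1.le (mul_nonneg hC hy.le)]

lemma geto_gronwall {T C : ℝ} [CompleteSpace F] (hT : 0 < T) (hC : 0 ≤ C)
    {f F' : ℝ → F} {φ : ℝ → ℝ}
    (hfc : ContinuousOn f (Set.Icc 0 T))
    (hfd : ∀ t ∈ Set.Ioo 0 T, HasDerivAt f (F' t) t)
    (hφ : Continuous φ) (hφ0 : ∀ s, 0 ≤ φ s)
    (hkey : ∀ t ∈ Set.Ioo 0 T, ⟪F' t, f t⟫ ≤ C * ‖f t‖ ^ 2 + φ t * ‖f t‖) :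
    ∀ t ∈ Set.Icc 0 T, ‖f t‖ ≤ Real.exp (C * t) * ‖f 0‖ +
      ∫ s in (0:ℝ)..t, Real.exp (C * (t - s)) * φ s := by
  intro t ht
  have hexpos : (0:ℝ) < Real.exp (C * t) := Real.exp_pos _
  have main : ∀ ε : ℝ, 0 < ε → ‖f t‖ ≤ Real.exp (C * t) * (‖f 0‖ + ε) +
      ∫ s in (0:ℝ)..t, Real.exp (C * (t - s)) * φ s := by
    intro ε hε
    set u : ℝ → ℝ := fun s => Real.sqrt (‖f s‖ ^ 2 + ε ^ 2) with hu_def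
    set ψ : ℝ → ℝ := fun s => Real.exp (-C * s) * φ s with hψ_def
    set g : ℝ → ℝ := fun s => Real.exp (-C * s) * u s - ∫ τ in (0:ℝ)..s, ψ τ with hg_def
    have hupos : ∀ s, 0 < u s := fun s => Real.sqrt_pos.2 (by positivity)
    have hule : ∀ s, ‖f s‖ ≤ u s := by
      intro s
      rw [hu_def]
      calc ‖f s‖ = Real.sqrt (‖f s‖ ^ 2) := (Real.sqrt_sq (norm_nonneg _)).symm
        _ ≤ Real.sqrt (‖f s‖ ^ 2 + ε ^ 2) := Real.sqrt_le_sqrt (by nlinarith)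
    have hu0 : u 0 ≤ ‖f 0‖ + ε := by
      rw [hu_def]
      calc Real.sqrt (‖f 0‖ ^ 2 + ε ^ 2) ≤ Real.sqrt ((‖f 0‖ + ε) ^ 2) :=
            Real.sqrt_le_sqrt (by nlinarith [norm_nonneg (f 0)])
        _ = ‖f 0‖ + ε := Real.sqrt_sq (by positivity)
    have hψc : Continuous ψ :=
      (Real.continuous_exp.comp (continuous_const.mul continuous_id)).mul hφ
    have hgc : ContinuousOn g (Set.Icc 0 T) := by
      apply ContinuousOn.sub
      · exact ((Real.continuous_exp.comp
          (continuous_const.mul continuous_id)).continuousOn).mul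
          (Real.continuous_sqrt.comp_continuousOn
            (((hfc.norm.pow 2).add continuousOn_const)))
      · exact (intervalIntegral.continuous_primitive
          (fun a b => hψc.intervalIntegrable a b) 0).continuousOn
    have hg' : ∀ s ∈ Set.Ioo 0 T, ∃ g', HasDerivAt g g' s ∧ g' ≤ 0 := by
      intro s hs
      have hds := hfd s hs
      have hn : HasDerivAt (fun τ => ‖f τ‖ ^ 2 + ε ^ 2) (2 * ⟪F' s, f s⟫) s := by
        have h1 : HasDerivAt (fun τ => (⟪f τ, f τ⟫ : ℝ)) (⟪f s, F' s⟫ + ⟪F' s, f s⟫) s :=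
          hds.inner ℝ hds
        have h2 := h1.add_const (ε ^ 2)
        have heq : (fun τ => (⟪f τ, f τ⟫ : ℝ) + ε ^ 2) = fun τ => ‖f τ‖ ^ 2 + ε ^ 2 := by
          funext τ; rw [real_inner_self_eq_norm_sq]
        rw [heq] at h2
        rw [real_inner_comm (F' s) (f s), ← two_mul] at h2
        exact h2
      have hu' : HasDerivAt u (⟪F' s, f s⟫ / u s) s := by
        have h3 := hn.sqrt (by positivity)
        convert h3 using 1
        rw [mul_div_mul_left _ _ (two_ne_zero (α := ℝ))]
      have hI' : HasDerivAt (fun τ => ∫ σ in (0:ℝ)..τ, ψ σ) (ψ s) s := by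
        apply intervalIntegral.integral_hasDerivAt_right
          (hψc.intervalIntegrable _ _) ?_ hψc.continuousAt
        exact ContinuousOn.stronglyMeasurableAtFilter isOpen_univ hψc.continuousOn s (mem_univ s)
      have hexp : HasDerivAt (fun τ => Real.exp (-C * τ)) (Real.exp (-C * s) * (-C * 1)) s :=
        ((hasDerivAt_id s).const_mul (-C)).exp
      have hgd : HasDerivAt g
          (Real.exp (-C * s) * (-C * 1) * u s + Real.exp (-C * s) * (⟪F' s, f s⟫ / u s)
            - ψ s) s := (hexp.mul hu').sub hI'
      refine ⟨_, hgd, ?_⟩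
      have hk := hkey s hs
      have hus := hupos s
      have hfu := hule s
      have hk2 : ⟪F' s, f s⟫ ≤ C * u s ^ 2 + φ s * u s := by
        have h4 : C * ‖f s‖ ^ 2 ≤ C * u s ^ 2 :=
          mul_le_mul_of_nonneg_left (pow_le_pow_left₀ (norm_nonneg (f s)) hfu 2) hC
        have h5 : φ s * ‖f s‖ ≤ φ s * u s := mul_le_mul_of_nonneg_left hfu (hφ0 s)
        linarith
      have h6 : ⟪F' s, f s⟫ / u s ≤ C * u s + φ s := by
        rw [div_le_iff₀ hus]; nlinarith
      have h7 : Real.exp (-C * s) * (-C * 1) * u s + Real.exp (-C * s) * (⟪F' s, f s⟫ / u s)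
          - ψ s = Real.exp (-C * s) * ((⟪F' s, f s⟫ / u s) - C * u s - φ s) := by
        rw [hψ_def]; ring
      rw [h7]
      apply mul_nonpos_of_nonneg_of_nonpos (Real.exp_nonneg _)
      linarith
    have hanti : AntitoneOn g (Set.Icc 0 T) := by
      apply antitoneOn_of_deriv_nonpos (convex_Icc 0 T) hgc
      · intro s hs
        rw [interior_Icc] at hs
        obtain ⟨g', h1, _⟩ := hg' s hs
        exact h1.differentiableAt.differentiableWithinAt
      · intro s hs
        rw [interior_Icc] at hs
        obtain ⟨g', h1, h2⟩ := hg' s hs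
        rw [h1.deriv]; exact h2
    have hg0 : g 0 = u 0 := by
      rw [hg_def]; simp
    have hgt := hanti (left_mem_Icc.2 hT.le) ht ht.1
    rw [hg0, hg_def] at hgt
    have h1 : Real.exp (-C * t) * u t ≤ u 0 + ∫ τ in (0:ℝ)..t, ψ τ := by
      dsimp only at hgt; linarith
    have h2 : u t ≤ Real.exp (C * t) * (u 0 + ∫ τ in (0:ℝ)..t, ψ τ) := by
      have h3 := mul_le_mul_of_nonneg_left h1 hexpos.le
      rw [← mul_assoc, ← Real.exp_add, show C * t + -C * t = 0 by ring,
        Real.exp_zero, one_mul] at h3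
      exact h3
    have h4 : Real.exp (C * t) * ∫ τ in (0:ℝ)..t, ψ τ
        = ∫ s in (0:ℝ)..t, Real.exp (C * (t - s)) * φ s := by
      rw [← intervalIntegral.integral_const_mul]
      apply intervalIntegral.integral_congr
      intro s _
      rw [hψ_def]
      dsimp only
      rw [← mul_assoc, ← Real.exp_add]
      ring_nf
    calc ‖f t‖ ≤ u t := hule t
      _ ≤ Real.exp (C * t) * (u 0 + ∫ τ in (0:ℝ)..t, ψ τ) := h2
      _ = Real.exp (C * t) * u 0 + Real.exp (C * t) * ∫ τ in (0:ℝ)..t, ψ τ := by ring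
      _ ≤ Real.exp (C * t) * (‖f 0‖ + ε) + ∫ s in (0:ℝ)..t, Real.exp (C * (t - s)) * φ s := by
          rw [h4]
          have := mul_le_mul_of_nonneg_left hu0 hexpos.le
          linarith
  apply le_of_forall_sub_le
  intro δ hδ
  rw [sub_le_iff_le_add]
  have h5 := main (δ / Real.exp (C * t)) (by positivity)
  calc ‖f t‖ ≤ Real.exp (C * t) * (‖f 0‖ + δ / Real.exp (C * t)) +
      ∫ s in (0:ℝ)..t, Real.exp (C * (t - s)) * φ s := h5
    _ = (Real.exp (C * t) * ‖f 0‖ + ∫ s in (0:ℝ)..t, Real.exp (C * (t - s)) * φ s) + δ := by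
        field_simp; ring

/-- Global existence and uniqueness for `z' = b(z + x)`, `z(0) = ξ`, together
with the sup-norm bound `r_z` and the Lipschitz bound
`r_z Υ_b(r_z + ‖x‖_∞) + ‖b ∘ x‖_∞`. -/
theorem global_existence_transformed_ode {d : ℕ} (T : ℝ) (hT : 0 < T)
    (b : EuclideanSpace ℝ (Fin d) → EuclideanSpace ℝ (Fin d))
    (x : ℝ → EuclideanSpace ℝ (Fin d)) (hx : ContinuousOn x (Set.Icc 0 T))
    (C_b : ℝ) (hCb : 0 ≤ C_b)
    (hb_osl : ∀ ς ζ : EuclideanSpace ℝ (Fin d),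
      ⟪b ς - b ζ, ς - ζ⟫ ≤ C_b * ‖ς - ζ‖ ^ 2)
    (Υ : ℝ → ℝ) (hΥ_mono : MonotoneOn Υ (Set.Ici 0))
    (hΥ_nonneg : ∀ r ∈ Set.Ici (0 : ℝ), 0 ≤ Υ r)
    (hb_loclip : ∀ r ∈ Set.Ici (0 : ℝ),
      ∀ ς ∈ Metric.closedBall (0 : EuclideanSpace ℝ (Fin d)) r,
      ∀ ζ ∈ Metric.closedBall (0 : EuclideanSpace ℝ (Fin d)) r,
        ‖b ς - b ζ‖ ≤ Υ r * ‖ς - ζ‖)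
    (ξ : EuclideanSpace ℝ (Fin d))
    (r_z : ℝ)
    (hr_z : r_z = Real.exp (C_b * T) * ‖ξ‖ +
      ∫ s in (0 : ℝ)..T, Real.exp (C_b * (T - s)) * ‖b (x s)‖) :
    ∃ z : ℝ → EuclideanSpace ℝ (Fin d),
      (ContinuousOn z (Set.Icc 0 T) ∧
        ∀ t ∈ Set.Icc (0 : ℝ) T, z t = ξ + ∫ s in (0 : ℝ)..t, b (z s + x s)) ∧
      (∀ w : ℝ → EuclideanSpace ℝ (Fin d), ContinuousOn w (Set.Icc 0 T) →
        (∀ t ∈ Set.Icc (0 : ℝ) T, w t = ξ + ∫ s in (0 : ℝ)..t, b (w s + x s)) →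
        Set.EqOn w z (Set.Icc 0 T)) ∧
      (∀ t ∈ Set.Icc (0 : ℝ) T, ‖z t‖ ≤ r_z) ∧
      (∀ s ∈ Set.Icc (0 : ℝ) T, ∀ t ∈ Set.Icc (0 : ℝ) T,
        ‖z t - z s‖ ≤
          (r_z * Υ (r_z + sSup ((fun u => ‖x u‖) '' Set.Icc (0 : ℝ) T)) +
            sSup ((fun u => ‖b (x u)‖) '' Set.Icc (0 : ℝ) T)) * |t - s|) := by
  have hT' : (0:ℝ) ≤ T := hT.le
  -- continuity of `b`
  have hbc : Continuous b := by
    rw [continuous_iff_continuousAt]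
    intro v
    have hr : (0:ℝ) ≤ ‖v‖ + 1 := by positivity
    have hlip : LipschitzOnWith (Real.toNNReal (Υ (‖v‖ + 1))) b
        (Metric.closedBall (0 : EuclideanSpace ℝ (Fin d)) (‖v‖ + 1)) := by
      apply LipschitzOnWith.of_dist_le_mul
      intro p hp q hq
      rw [dist_eq_norm, dist_eq_norm, Real.coe_toNNReal _ (hΥ_nonneg _ hr)]
      exact hb_loclip _ hr p hp q hq
    apply hlip.continuousOn.continuousAt
    refine Filter.mem_of_superset (Metric.isOpen_ball.mem_nhds ?_) Metric.ball_subset_closedBall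
    rw [mem_ball_zero_iff]; linarith
  -- continuous extension of `x`
  set x' : ℝ → EuclideanSpace ℝ (Fin d) := fun t => x (Set.projIcc 0 T hT' t) with hx'def
  have hx'c : Continuous x' :=
    (continuousOn_iff_continuous_restrict.mp hx).comp continuous_projIcc
  have hx'eq : ∀ t ∈ Set.Icc (0:ℝ) T, x' t = x t := by
    intro t ht
    simp [hx'def, Set.projIcc_of_mem hT' ht]
  -- sups
  set Mx := sSup ((fun u => ‖x u‖) '' Set.Icc (0:ℝ) T) with hMxdef
  have hMxb : BddAbove ((fun u => ‖x u‖) '' Set.Icc (0:ℝ) T) :=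
    (isCompact_Icc.image_of_continuousOn hx.norm).bddAbove
  have hMx : ∀ t ∈ Set.Icc (0:ℝ) T, ‖x t‖ ≤ Mx := fun t ht => le_csSup hMxb ⟨t, ht, rfl⟩
  have hMx0 : (0:ℝ) ≤ Mx := le_trans (norm_nonneg _) (hMx 0 ⟨le_rfl, hT'⟩)
  have hMx' : ∀ t, ‖x' t‖ ≤ Mx := fun t => by
    rw [hx'def]; exact hMx _ (Set.projIcc 0 T hT' t).2
  have hbxc : ContinuousOn (fun u => ‖b (x u)‖) (Set.Icc (0:ℝ) T) :=
    (hbc.comp_continuousOn hx).norm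
  set Mbx := sSup ((fun u => ‖b (x u)‖) '' Set.Icc (0:ℝ) T) with hMbxdef
  have hMbxb : BddAbove ((fun u => ‖b (x u)‖) '' Set.Icc (0:ℝ) T) :=
    (isCompact_Icc.image_of_continuousOn hbxc).bddAbove
  have hMbx : ∀ t ∈ Set.Icc (0:ℝ) T, ‖b (x t)‖ ≤ Mbx := fun t ht => le_csSup hMbxb ⟨t, ht, rfl⟩
  -- nonnegativity of `r_z`
  have hint_nonneg : 0 ≤ ∫ s in (0:ℝ)..T, Real.exp (C_b*(T-s)) * ‖b (x s)‖ :=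
    intervalIntegral.integral_nonneg hT' (fun u _ => by positivity)
  have hrz0 : 0 ≤ r_z := by
    rw [hr_z]
    have : 0 ≤ Real.exp (C_b*T) * ‖ξ‖ := by positivity
    linarith
  -- constants
  set K := Υ (r_z + Mx) with hKdef
  have hrM : (0:ℝ) ≤ r_z + Mx := by linarith
  have hK0 : 0 ≤ K := hΥ_nonneg _ hrM
  set C₀ := K * (r_z + Mx) + ‖b 0‖ with hC₀def
  have hC₀0 : 0 ≤ C₀ := by positivity
  -- truncated vector field
  set vf : ℝ → EuclideanSpace ℝ (Fin d) → EuclideanSpace ℝ (Fin d) :=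
    fun t y => b (getoProj r_z y + x' t) with hvfdef
  have hargmem : ∀ (t:ℝ) (y : EuclideanSpace ℝ (Fin d)),
      ‖getoProj r_z y + x' t‖ ≤ r_z + Mx := fun t y =>
    (norm_add_le _ _).trans (add_le_add (getoProj_norm_le hrz0 y) (hMx' t))
  have hmem1 : ∀ (t:ℝ) (y : EuclideanSpace ℝ (Fin d)),
      getoProj r_z y + x' t ∈ Metric.closedBall (0 : EuclideanSpace ℝ (Fin d)) (r_z + Mx) := by
    intro t y
    rw [Metric.mem_closedBall, dist_zero_right]
    exact hargmem t y
  have hvfnorm : ∀ t y, ‖vf t y‖ ≤ C₀ := by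
    intro t y
    have h1 : ‖b (getoProj r_z y + x' t) - b 0‖ ≤ K * ‖getoProj r_z y + x' t - 0‖ :=
      hb_loclip _ hrM _ (hmem1 t y) 0 (Metric.mem_closedBall_self hrM)
    rw [sub_zero] at h1
    calc ‖vf t y‖ = ‖(b (getoProj r_z y + x' t) - b 0) + b 0‖ := by
          rw [sub_add_cancel]
      _ ≤ ‖b (getoProj r_z y + x' t) - b 0‖ + ‖b 0‖ := norm_add_le _ _
      _ ≤ K * (r_z + Mx) + ‖b 0‖ :=
          add_le_add (h1.trans (mul_le_mul_of_nonneg_left (hargmem t y) hK0)) le_rfl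
      _ = C₀ := hC₀def.symm
  -- Picard-Lindelöf
  have hPL : IsPicardLindelof vf (tmin := 0) (tmax := T) ⟨0, left_mem_Icc.2 hT'⟩ ξ
      (Real.toNNReal (C₀ * T + 1)) 0 (Real.toNNReal C₀) (Real.toNNReal (2*K)) := by
    refine ⟨?_, ?_, fun t _ y _ => by rw [Real.coe_toNNReal _ hC₀0]; exact hvfnorm t y, ?_⟩
    · intro t _
      apply LipschitzOnWith.of_dist_le_mul
      intro p _ q _
      rw [dist_eq_norm, dist_eq_norm, Real.coe_toNNReal _ (by positivity)]
      have h1 : ‖b (getoProj r_z p + x' t) - b (getoProj r_z q + x' t)‖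
          ≤ K * ‖(getoProj r_z p + x' t) - (getoProj r_z q + x' t)‖ :=
        hb_loclip _ hrM _ (hmem1 t p) _ (hmem1 t q)
      have h2 : (getoProj r_z p + x' t) - (getoProj r_z q + x' t)
          = getoProj r_z p - getoProj r_z q := by abel
      rw [h2] at h1
      calc ‖vf t p - vf t q‖ ≤ K * ‖getoProj r_z p - getoProj r_z q‖ := h1
        _ ≤ K * (2 * ‖p - q‖) := mul_le_mul_of_nonneg_left (getoProj_lip hrz0 p q) hK0
        _ = 2 * K * ‖p - q‖ := by ring
    · intro y _
      exact (hbc.comp (continuous_const.add hx'c)).continuousOn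
    · have hmax : max (T - 0) (0 - 0) = T := by
        rw [sub_zero, sub_zero]; exact max_eq_left hT'
      simp only [NNReal.coe_zero, sub_zero]
      rw [Real.coe_toNNReal _ hC₀0, Real.coe_toNNReal _ (by positivity), max_eq_left hT']; linarith
  obtain ⟨f, hf0', hfderiv⟩ := hPL.exists_eq_forall_mem_Icc_hasDerivWithinAt₀
  have hf0 : f 0 = ξ := hf0'
  have hfc : ContinuousOn f (Set.Icc 0 T) := fun t ht => (hfderiv t ht).continuousWithinAt
  have hfd' : ∀ t ∈ Set.Ioo (0:ℝ) T, HasDerivAt f (vf t (f t)) t := fun t ht =>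
    (hfderiv t (Set.Ioo_subset_Icc_self ht)).hasDerivAt (Icc_mem_nhds ht.1 ht.2)
  -- a priori bound
  have hφc : Continuous (fun s => ‖b (x' s)‖) := (hbc.comp hx'c).norm
  have hG := geto_gronwall hT hCb hfc hfd' hφc (fun s => norm_nonneg _) ?key
  case key =>
    intro t _
    have h1 : ⟪b (getoProj r_z (f t) + x' t) - b (x' t), f t⟫ ≤ C_b * ‖f t‖ ^ 2 :=
      getoProj_inner_key hrz0 hCb hb_osl (f t) (x' t)
    have h2 : ⟪b (x' t), f t⟫ ≤ ‖b (x' t)‖ * ‖f t‖ := real_inner_le_norm _ _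
    have h3 : ⟪vf t (f t), f t⟫
        = ⟪b (getoProj r_z (f t) + x' t) - b (x' t), f t⟫ + ⟪b (x' t), f t⟫ := by
      simp only [hvfdef]
      rw [inner_sub_left]; ring
    rw [h3]; exact add_le_add h1 h2
  have hexpc : Continuous (fun s : ℝ => Real.exp (C_b * (T - s))) :=
    Real.continuous_exp.comp (continuous_const.mul (continuous_const.sub continuous_id))
  have hbound : ∀ t ∈ Set.Icc (0:ℝ) T, ‖f t‖ ≤ r_z := by
    intro t ht
    have h1 := hG t ht
    rw [hf0] at h1
    have e1 : Real.exp (C_b*t) * ‖ξ‖ ≤ Real.exp (C_b*T) * ‖ξ‖ := by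
      apply mul_le_mul_of_nonneg_right _ (norm_nonneg _)
      exact Real.exp_le_exp.2 (mul_le_mul_of_nonneg_left ht.2 hCb)
    have hexpc' : Continuous (fun s : ℝ => Real.exp (C_b * (t - s))) :=
      Real.continuous_exp.comp (continuous_const.mul (continuous_const.sub continuous_id))
    have e2 : (∫ s in (0:ℝ)..t, Real.exp (C_b*(t-s)) * ‖b (x' s)‖)
        ≤ ∫ s in (0:ℝ)..t, Real.exp (C_b*(T-s)) * ‖b (x' s)‖ := by
      apply intervalIntegral.integral_mono_on ht.1
        ((hexpc'.mul hφc).intervalIntegrable _ _) ((hexpc.mul hφc).intervalIntegrable _ _)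
      intro s _
      apply mul_le_mul_of_nonneg_right _ (norm_nonneg _)
      apply Real.exp_le_exp.2
      have : t - s ≤ T - s := by linarith [ht.2]
      exact mul_le_mul_of_nonneg_left this hCb
    have e3 : (∫ s in (0:ℝ)..t, Real.exp (C_b*(T-s)) * ‖b (x' s)‖)
        ≤ ∫ s in (0:ℝ)..T, Real.exp (C_b*(T-s)) * ‖b (x' s)‖ := by
      apply intervalIntegral.integral_mono_interval le_rfl ht.1 ht.2 ?_
        ((hexpc.mul hφc).intervalIntegrable _ _)
      filter_upwards with s using mul_nonneg (Real.exp_pos _).le (norm_nonneg _)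
    have e4 : (∫ s in (0:ℝ)..T, Real.exp (C_b*(T-s)) * ‖b (x' s)‖)
        = ∫ s in (0:ℝ)..T, Real.exp (C_b*(T-s)) * ‖b (x s)‖ := by
      apply intervalIntegral.integral_congr
      intro s hs
      dsimp only
      rw [hx'eq s (by rwa [Set.uIcc_of_le hT'] at hs)]
    rw [hr_z]
    linarith
  have hPf : ∀ t ∈ Set.Icc (0:ℝ) T, getoProj r_z (f t) = f t := fun t ht =>
    getoProj_of_le (hbound t ht)
  -- integral equation
  have hw_cont : ContinuousOn (fun s => vf s (f s)) (Set.Icc (0:ℝ) T) := by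
    simp only [hvfdef]
    exact hbc.comp_continuousOn
      (((getoProj_continuous hrz0).comp_continuousOn hfc).add hx'c.continuousOn)
  have hinteq : ∀ t ∈ Set.Icc (0:ℝ) T, f t = ξ + ∫ s in (0:ℝ)..t, b (f s + x s) := by
    intro t ht
    have hftc : (∫ s in (0:ℝ)..t, vf s (f s)) = f t - f 0 := by
      have hsubset : Set.uIcc (0:ℝ) t ⊆ Set.Icc (0:ℝ) T := by
        rw [Set.uIcc_of_le ht.1]
        exact Set.Icc_subset_Icc_right ht.2
      apply intervalIntegral.integral_eq_sub_of_hasDeriv_right_of_le ht.1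
        (hfc.mono (Set.Icc_subset_Icc_right ht.2)) ?_
        ((hw_cont.mono hsubset).intervalIntegrable)
      intro s hs
      exact (hfd' s ⟨hs.1, lt_of_lt_of_le hs.2 ht.2⟩).hasDerivWithinAt
    have hcongr : (∫ s in (0:ℝ)..t, vf s (f s)) = ∫ s in (0:ℝ)..t, b (f s + x s) := by
      apply intervalIntegral.integral_congr
      intro s hs
      rw [Set.uIcc_of_le ht.1] at hs
      have hsIcc : s ∈ Set.Icc (0:ℝ) T := ⟨hs.1, hs.2.trans ht.2⟩
      simp only [hvfdef]
      rw [hPf s hsIcc, hx'eq s hsIcc]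
    rw [← hcongr, hftc, hf0]
    abel
  refine ⟨f, ⟨hfc, hinteq⟩, ?_, hbound, ?_⟩
  · -- uniqueness
    intro w hwc hweq t ht
    have hψw : ContinuousOn (fun s => b (w s + x s)) (Set.Icc (0:ℝ) T) :=
      hbc.comp_continuousOn (hwc.add hx)
    have hwd : ∀ τ ∈ Set.Ioo (0:ℝ) T, HasDerivAt w (b (w τ + x τ)) τ := by
      intro τ hτ
      have hmem : Set.Icc (0:ℝ) T ∈ nhds τ := Icc_mem_nhds hτ.1 hτ.2
      have hsubset : Set.uIcc (0:ℝ) τ ⊆ Set.Icc (0:ℝ) T := by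
        rw [Set.uIcc_of_le hτ.1.le]
        exact Set.Icc_subset_Icc_right hτ.2.le
      have hint : IntervalIntegrable (fun s => b (w s + x s)) MeasureTheory.volume 0 τ :=
        (hψw.mono hsubset).intervalIntegrable
      have hmeas : StronglyMeasurableAtFilter (fun s => b (w s + x s)) (nhds τ) :=
        ContinuousOn.stronglyMeasurableAtFilter isOpen_Ioo
          (hψw.mono Set.Ioo_subset_Icc_self) τ hτ
      have hca : ContinuousAt (fun s => b (w s + x s)) τ := hψw.continuousAt hmem
      have hW : HasDerivAt (fun σ => ξ + ∫ s in (0:ℝ)..σ, b (w s + x s)) (b (w τ + x τ)) τ :=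
        (intervalIntegral.integral_hasDerivAt_right hint hmeas hca).const_add ξ
      apply hW.congr_of_eventuallyEq
      filter_upwards [hmem] with σ hσ
      exact hweq σ hσ
    have hfd2 : ∀ τ ∈ Set.Ioo (0:ℝ) T, HasDerivAt f (b (f τ + x τ)) τ := by
      intro τ hτ
      have := hfd' τ hτ
      have hτIcc : τ ∈ Set.Icc (0:ℝ) T := Set.Ioo_subset_Icc_self hτ
      simp only [hvfdef] at this
      rwa [hPf τ hτIcc, hx'eq τ hτIcc] at this
    have hdiff := geto_gronwall (f := fun τ => w τ - f τ)
      (F' := fun τ => b (w τ + x τ) - b (f τ + x τ)) (φ := fun _ => (0:ℝ))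
      hT hCb (hwc.sub hfc) (fun τ hτ => (hwd τ hτ).sub (hfd2 τ hτ))
      continuous_const (fun _ => le_rfl) ?keyu t ht
    case keyu =>
      intro τ _
      have h1 := hb_osl (w τ + x τ) (f τ + x τ)
      have harg : (w τ + x τ) - (f τ + x τ) = w τ - f τ := by abel
      rw [harg] at h1
      simpa using h1
    have h0 : w 0 - f 0 = 0 := by
      have hw0 := hweq 0 ⟨le_rfl, hT'⟩
      rw [intervalIntegral.integral_same, add_zero] at hw0
      rw [hw0, hf0, sub_self]
    have hz : ‖w t - f t‖ ≤ 0 := by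
      have h2 := hdiff
      simp only [h0, norm_zero, mul_zero, intervalIntegral.integral_zero] at h2
      simpa using h2
    have : w t - f t = 0 := norm_le_zero_iff.mp hz
    exact sub_eq_zero.mp this
  · -- Lipschitz bound
    intro s hs t ht
    have hψz : ContinuousOn (fun u => b (f u + x u)) (Set.Icc (0:ℝ) T) :=
      hbc.comp_continuousOn (hfc.add hx)
    have hint0 : ∀ τ ∈ Set.Icc (0:ℝ) T,
        IntervalIntegrable (fun u => b (f u + x u)) MeasureTheory.volume 0 τ := by
      intro τ hτ
      have hsubset : Set.uIcc (0:ℝ) τ ⊆ Set.Icc (0:ℝ) T := by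
        rw [Set.uIcc_of_le hτ.1]
        exact Set.Icc_subset_Icc_right hτ.2
      exact (hψz.mono hsubset).intervalIntegrable
    have hsub : f t - f s = ∫ u in s..t, b (f u + x u) := by
      rw [hinteq t ht, hinteq s hs, add_sub_add_left_eq_sub]
      exact intervalIntegral.integral_interval_sub_left (hint0 t ht) (hint0 s hs)
    rw [hsub]
    apply intervalIntegral.norm_integral_le_of_norm_le_const
    intro u hu
    have huIcc : u ∈ Set.Icc (0:ℝ) T :=
      (Set.uIcc_subset_Icc hs ht) (Set.uIoc_subset_uIcc hu)
    have hm1 : f u + x u ∈ Metric.closedBall (0 : EuclideanSpace ℝ (Fin d)) (r_z + Mx) := by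
      rw [Metric.mem_closedBall, dist_zero_right]
      exact (norm_add_le _ _).trans (add_le_add (hbound u huIcc) (hMx u huIcc))
    have hm2 : x u ∈ Metric.closedBall (0 : EuclideanSpace ℝ (Fin d)) (r_z + Mx) := by
      rw [Metric.mem_closedBall, dist_zero_right]
      linarith [hMx u huIcc]
    have h1 : ‖b (f u + x u) - b (x u)‖ ≤ K * ‖f u + x u - x u‖ :=
      hb_loclip _ hrM _ hm1 _ hm2
    rw [add_sub_cancel_right] at h1
    calc ‖b (f u + x u)‖ = ‖(b (f u + x u) - b (x u)) + b (x u)‖ := by rw [sub_add_cancel]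
      _ ≤ ‖b (f u + x u) - b (x u)‖ + ‖b (x u)‖ := norm_add_le _ _
      _ ≤ K * ‖f u‖ + Mbx := add_le_add h1 (hMbx u huIcc)
      _ ≤ r_z * K + Mbx := by
          have := mul_le_mul_of_nonneg_left (hbound u huIcc) hK0
          linarith
end

section
/- Let b : ℝ^d → ℝ^d be continuous and satisfy a one-sided Lipschitz condition with constant C_b, let N ∈ ℕ, h > 0 with C_b h < 1, ξ ∈ ℝ^d, and let (x_j)_{0 ≤ j ≤ N} be any sequence in ℝ^d. Then there exists a unique sequence (y_j)_{0 ≤ j ≤ N} in ℝ^d satisfying y_0 = ξ and y_{j+1} = y_j + h b(y_{j+1}) + x_{j+1} − x_j for all j ∈ {0, …, N−1}. -/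
open scoped RealInnerProductSpace
open Module Filter

/-- A continuous strongly monotone map on a finite-dimensional real inner
product space is surjective. -/
theorem strongMono_surjective : ∀ (n : ℕ) (E : Type) (_ : NormedAddCommGroup E)
    (_ : InnerProductSpace ℝ E) (_ : FiniteDimensional ℝ E), finrank ℝ E = n →
    ∀ (F : E → E), Continuous F → ∀ (m : ℝ), 0 < m →
    (∀ x y : E, m * ‖x - y‖ ^ 2 ≤ ⟪F x - F y, x - y⟫) → Function.Surjective F := by
  intro n
  induction n with
  | zero =>
    intro E _ _ _ hrank F _ m _ _ y
    have : Subsingleton E := finrank_zero_iff.mp hrank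
    exact ⟨y, Subsingleton.elim _ _⟩
  | succ n ih =>
    intro E _ _ _ hrank F hF m hm hmono y
    -- pick a unit vector e
    have hnt : Nontrivial E := by
      have : 0 < finrank ℝ E := by omega
      exact finrank_pos_iff.mp this
    obtain ⟨v, hv⟩ := exists_ne (0 : E)
    set e : E := ‖v‖⁻¹ • v with he_def
    have hne : ‖e‖ = 1 := by
      rw [he_def, norm_smul, norm_inv, norm_norm]
      field_simp [norm_ne_zero_iff.mpr hv]
    have he0 : e ≠ 0 := by
      intro h0; rw [h0, norm_zero] at hne; norm_num at hne
    set K : Submodule ℝ E := (ℝ ∙ e)ᗮ with hK_def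
    have hKrank : finrank ℝ (↥K) = n := by
      have h2 := Submodule.finrank_add_finrank_orthogonal (K := (ℝ ∙ e))
      rw [finrank_span_singleton he0, hrank, ← hK_def] at h2
      omega
    have hee : ⟪e, e⟫ = 1 := by
      rw [real_inner_self_eq_norm_sq, hne]; norm_num
    -- orthogonality facts
    have horth : ∀ u : K, ⟪e, (u : E)⟫ = 0 := by
      intro u
      have hu2 : (u : E) ∈ (ℝ ∙ e)ᗮ := u.2
      exact (Submodule.mem_orthogonal _ _).mp hu2 e (Submodule.mem_span_singleton_self e)
    have horth' : ∀ u : K, ⟪(u : E), e⟫ = 0 := fun u => by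
      rw [real_inner_comm]; exact horth u
    -- the slice function
    set g : K → ℝ → ℝ := fun u s => ⟪F ((u : E) + s • e), e⟫ with hg_def
    have hgcont : Continuous fun p : K × ℝ => g p.1 p.2 := by
      apply Continuous.inner _ continuous_const
      exact hF.comp ((continuous_subtype_val.comp continuous_fst).add
        (continuous_snd.smul continuous_const))
    have hgmono : ∀ (u : K) (s t : ℝ), m * (s - t) ^ 2 ≤ (g u s - g u t) * (s - t) := by
      intro u s t
      have h1 := hmono ((u : E) + s • e) ((u : E) + t • e)
      have hdiff : ((u : E) + s • e) - ((u : E) + t • e) = (s - t) • e := by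
        rw [sub_smul]; abel
      rw [hdiff] at h1
      have h2 : ‖(s - t) • e‖ ^ 2 = (s - t) ^ 2 := by
        rw [norm_smul, hne, mul_one, Real.norm_eq_abs, sq_abs]
      rw [h2] at h1
      calc m * (s - t) ^ 2 ≤ ⟪F ((u:E) + s • e) - F ((u:E) + t • e), (s - t) • e⟫ := h1
        _ = (g u s - g u t) * (s - t) := by
            rw [real_inner_smul_right, inner_sub_left]; ring
    have hglin : ∀ (u : K) (s t : ℝ), t ≤ s → m * (s - t) ≤ g u s - g u t := by
      intro u s t hts
      rcases eq_or_lt_of_le hts with h | h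
      · simp [h]
      · have := hgmono u s t
        nlinarith
    -- for each u there is a unique s with g u s = ⟪y, e⟫
    set c : ℝ := ⟪y, e⟫ with hc_def
    have hexists : ∀ u : K, ∃ s : ℝ, g u s = c := by
      intro u
      set M : ℝ := |c - g u 0| / m with hM_def
      have hM0 : 0 ≤ M := div_nonneg (abs_nonneg _) hm.le
      have hgb : c ≤ g u M := by
        have := hglin u M 0 hM0
        have hmM : m * M = |c - g u 0| := by
          rw [hM_def]; field_simp
        have habs : c - g u 0 ≤ |c - g u 0| := le_abs_self _
        simp only [sub_zero] at this
        linarith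
      have hga : g u (-M) ≤ c := by
        have := hglin u 0 (-M) (by linarith)
        have hmM : m * (0 - -M) = |c - g u 0| := by
          rw [hM_def]; field_simp; ring
        have habs : -(c - g u 0) ≤ |c - g u 0| := neg_le_abs _
        linarith
      have hcont : ContinuousOn (g u) (Set.Icc (-M) M) :=
        (hgcont.comp (Continuous.prodMk_right u)).continuousOn
      have := intermediate_value_Icc (by linarith : (-M : ℝ) ≤ M) hcont
      have hc_mem : c ∈ Set.Icc (g u (-M)) (g u M) := ⟨hga, hgb⟩
      obtain ⟨s, _, hs⟩ := this hc_mem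
      exact ⟨s, hs⟩
    have huniq : ∀ (u : K) (s t : ℝ), g u s = c → g u t = c → s = t := by
      intro u s t hs ht
      have := hgmono u s t
      rw [hs, ht, sub_self, zero_mul] at this
      by_contra hne'
      have hst : s - t ≠ 0 := sub_ne_zero.mpr hne'
      have hlt : (0:ℝ) < (s - t) ^ 2 := by positivity
      nlinarith [mul_pos hm hlt]
    set σ : K → ℝ := fun u => (hexists u).choose with hσ_def
    have hσ_spec : ∀ u : K, g u (σ u) = c := fun u => (hexists u).choose_spec
    -- quantitative continuity of σ
    have hσ_est : ∀ u v : K, m * |σ u - σ v| ≤ |g u (σ v) - c| := by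
      intro u v
      rcases eq_or_ne (σ u) (σ v) with h | h
      · rw [h, sub_self, abs_zero, mul_zero]; exact abs_nonneg _
      · have h1 := hgmono u (σ u) (σ v)
        rw [hσ_spec u] at h1
        have h2 : (c - g u (σ v)) * (σ u - σ v) ≤ |g u (σ v) - c| * |σ u - σ v| := by
          calc (c - g u (σ v)) * (σ u - σ v) ≤ |(c - g u (σ v)) * (σ u - σ v)| := le_abs_self _
            _ = |g u (σ v) - c| * |σ u - σ v| := by rw [abs_mul, abs_sub_comm]
        have h3 : m * |σ u - σ v| ^ 2 ≤ |g u (σ v) - c| * |σ u - σ v| := by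
          rw [sq_abs]; linarith
        have h4 : 0 < |σ u - σ v| := abs_pos.mpr (sub_ne_zero.mpr h)
        nlinarith
    have hσ_cont : Continuous σ := by
      rw [continuous_iff_continuousAt]
      intro v
      rw [ContinuousAt, tendsto_iff_dist_tendsto_zero]
      apply squeeze_zero (fun u => dist_nonneg)
        (g := fun u => m⁻¹ * |g u (σ v) - c|)
      · intro u
        rw [Real.dist_eq]
        have := hσ_est u v
        rw [le_inv_mul_iff₀ hm]
        linarith [this]
      · have : Continuous fun u : K => m⁻¹ * |g u (σ v) - c| := by
          apply continuous_const.mul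
          exact ((hgcont.comp (continuous_id.prodMk continuous_const)).sub
            continuous_const).abs
        have h0 : m⁻¹ * |g v (σ v) - c| = 0 := by
          rw [hσ_spec v, sub_self, abs_zero, mul_zero]
        have := this.tendsto v
        rw [h0] at this
        exact this
    -- projection onto K
    have hPmem : ∀ w : E, w - ⟪w, e⟫ • e ∈ K := by
      intro w
      rw [hK_def, Submodule.mem_orthogonal]
      intro z hz
      obtain ⟨r, rfl⟩ := Submodule.mem_span_singleton.mp hz
      rw [real_inner_smul_left, inner_sub_right, real_inner_smul_right, hee]
      ring_nf
      rw [real_inner_comm]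
      ring
    set P : E → K := fun w => ⟨w - ⟪w, e⟫ • e, hPmem w⟩ with hP_def
    have hPcont : Continuous P := by
      rw [hP_def]
      apply Continuous.subtype_mk
      exact continuous_id.sub ((continuous_id.inner continuous_const).smul continuous_const)
    -- the reduced map
    set G : K → K := fun u => P (F ((u : E) + σ u • e)) with hG_def
    have hGcont : Continuous G :=
      hPcont.comp (hF.comp (continuous_subtype_val.add (hσ_cont.smul continuous_const)))
    have hGmono : ∀ u v : K, m * ‖u - v‖ ^ 2 ≤ ⟪G u - G v, u - v⟫ := by
      intro u v
      set a : E := (u : E) + σ u • e with ha_def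
      set b : E := (v : E) + σ v • e with hb_def
      have hinner : ⟪G u - G v, u - v⟫ = ⟪F a - F b, (u : E) - (v : E)⟫ := by
        rw [Submodule.coe_inner]
        have hcoe : ((G u - G v : K) : E)
            = (F a - F b) - (⟪F a, e⟫ - ⟪F b, e⟫) • e := by
          simp only [hG_def, hP_def, Submodule.coe_sub, ← ha_def, ← hb_def]
          rw [sub_smul]; abel
        have hcoe2 : ((u - v : K) : E) = (u : E) - (v : E) := by simp
        rw [hcoe, hcoe2, inner_sub_left, real_inner_smul_left]
        have : ⟪e, (u : E) - (v : E)⟫ = 0 := by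
          have := horth (u - v)
          rwa [hcoe2] at this
        rw [this, mul_zero, sub_zero]
      have hkey := hmono a b
      have hab : a - b = ((u : E) - (v : E)) + (σ u - σ v) • e := by
        rw [ha_def, hb_def, sub_smul]; abel
      have hsplit : ⟪F a - F b, a - b⟫
          = ⟪F a - F b, (u : E) - (v : E)⟫ + (σ u - σ v) * (g u (σ u) - g v (σ v)) := by
        rw [hab, inner_add_right, real_inner_smul_right, inner_sub_left]
        simp only [hg_def, ← ha_def, ← hb_def, inner_sub_left]
      have hzero : g u (σ u) - g v (σ v) = 0 := by rw [hσ_spec, hσ_spec, sub_self]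
      have hnorm : ‖a - b‖ ^ 2 = ‖(u : E) - (v : E)‖ ^ 2 + (σ u - σ v) ^ 2 := by
        rw [hab, norm_add_sq_real]
        have h1 : ⟪(u : E) - (v : E), (σ u - σ v) • e⟫ = 0 := by
          rw [real_inner_smul_right]
          have hcoe2 : ((u - v : K) : E) = (u : E) - (v : E) := by simp
          have := horth' (u - v)
          rw [hcoe2] at this
          rw [this, mul_zero]
        have h2 : ‖(σ u - σ v) • e‖ ^ 2 = (σ u - σ v) ^ 2 := by
          rw [norm_smul, hne, mul_one, Real.norm_eq_abs, sq_abs]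
        rw [h1, h2]; ring
      have hnormK : ‖u - v‖ = ‖(u : E) - (v : E)‖ := by
        rw [← Submodule.coe_sub]; rfl
      rw [hinner]
      rw [hzero, mul_zero, add_zero] at hsplit
      rw [hnorm] at hkey
      rw [hnormK]
      nlinarith [sq_nonneg (σ u - σ v)]
    -- apply the induction hypothesis
    obtain ⟨u, hu⟩ := ih (↥K) inferInstance inferInstance inferInstance hKrank G hGcont m hm hGmono (P y)
    refine ⟨(u : E) + σ u • e, ?_⟩
    set w : E := F ((u : E) + σ u • e) with hw_def
    have h1 : ⟪w, e⟫ = ⟪y, e⟫ := hσ_spec u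
    have h2 : w - ⟪w, e⟫ • e = y - ⟪y, e⟫ • e := by
      have := congrArg (Subtype.val) hu
      simpa [hG_def, hP_def, ← hw_def] using this
    rw [h1] at h2
    exact sub_left_injective h2

set_option maxHeartbeats 1000000 in
/-- Well-posedness of the implicit Euler scheme
`y_{j+1} = y_j + h b(y_{j+1}) + x_{j+1} - x_j`, `y_0 = ξ`. -/
theorem implicit_euler_well_posedness {d : ℕ}
    (b : EuclideanSpace ℝ (Fin d) → EuclideanSpace ℝ (Fin d))
    (hb_cont : Continuous b) (C_b : ℝ) (hCb : 0 ≤ C_b)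
    (hb : ∀ ς ζ : EuclideanSpace ℝ (Fin d),
      ⟪b ς - b ζ, ς - ζ⟫ ≤ C_b * ‖ς - ζ‖ ^ 2)
    (N : ℕ) (h : ℝ) (hh : 0 < h) (hCh : C_b * h < 1)
    (ξ : EuclideanSpace ℝ (Fin d))
    (x : Fin (N + 1) → EuclideanSpace ℝ (Fin d)) :
    ∃! y : Fin (N + 1) → EuclideanSpace ℝ (Fin d),
      y 0 = ξ ∧
      ∀ j : Fin N,
        y j.succ = y j.castSucc + h • b (y j.succ) + x j.succ - x j.castSucc := by
  set F : EuclideanSpace ℝ (Fin d) → EuclideanSpace ℝ (Fin d) := fun z => z - h • b z with hF_def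
  have hm : 0 < 1 - C_b * h := by linarith
  have hmono : ∀ z w : EuclideanSpace ℝ (Fin d), (1 - C_b * h) * ‖z - w‖ ^ 2 ≤ ⟪F z - F w, z - w⟫ := by
    intro z w
    have h1 := hb z w
    have hFe : F z - F w = (z - w) - h • (b z - b w) := by
      rw [hF_def]; simp only [smul_sub]; abel
    rw [hFe, inner_sub_left, real_inner_smul_left, real_inner_self_eq_norm_sq]
    nlinarith [mul_le_mul_of_nonneg_left h1 hh.le]
  have hFcont : Continuous F := continuous_id.sub (hb_cont.const_smul h)
  have hsurj : Function.Surjective F :=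
    strongMono_surjective (Module.finrank ℝ (EuclideanSpace ℝ (Fin d))) (EuclideanSpace ℝ (Fin d)) inferInstance inferInstance inferInstance
      rfl F hFcont _ hm hmono
  have hinj : Function.Injective F := by
    intro z w hzw
    have h1 := hmono z w
    rw [hzw, sub_self, inner_zero_left] at h1
    have h2 : ‖z - w‖ ^ 2 ≤ 0 := by nlinarith
    have h3 : ‖z - w‖ = 0 := by nlinarith [sq_nonneg ‖z - w‖, norm_nonneg (z - w)]
    exact sub_eq_zero.mp (norm_eq_zero.mp h3)
  choose sol hsol using hsurj
  -- extend x to ℕ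
  set x' : ℕ → EuclideanSpace ℝ (Fin d) := fun j => x ⟨min j N, by omega⟩ with hx'_def
  set y' : ℕ → EuclideanSpace ℝ (Fin d) := fun n => Nat.rec ξ (fun j yj => sol (yj + x' (j + 1) - x' j)) n
    with hy'_def
  have hy'0 : y' 0 = ξ := rfl
  have hy'succ : ∀ j : ℕ, y' (j + 1) = sol (y' j + x' (j + 1) - x' j) := fun j => rfl
  have hstep : ∀ j : ℕ, y' (j + 1) = y' j + h • b (y' (j + 1)) + x' (j + 1) - x' j := by
    intro j
    have h2 : y' (j + 1) - h • b (y' (j + 1)) = y' j + x' (j + 1) - x' j := by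
      rw [hy'succ j]; exact hsol _
    exact (sub_eq_iff_eq_add.mp h2).trans (by abel)
  set y : Fin (N + 1) → EuclideanSpace ℝ (Fin d) := fun i => y' i.val with hy_def
  have hx1 : ∀ j : Fin N, x' (j.val + 1) = x j.succ := by
    intro j
    show x ⟨min (j.val + 1) N, by omega⟩ = x j.succ
    exact congrArg x (Fin.ext (by simp only [Fin.val_succ]; omega))
  have hx2 : ∀ j : Fin N, x' j.val = x j.castSucc := by
    intro j
    show x ⟨min j.val N, by omega⟩ = x j.castSucc
    exact congrArg x (Fin.ext (by simp only [Fin.coe_castSucc]; omega))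
  have hy_prop : y 0 = ξ ∧ ∀ j : Fin N,
      y j.succ = y j.castSucc + h • b (y j.succ) + x j.succ - x j.castSucc := by
    constructor
    · exact hy'0
    · intro j
      have := hstep j.val
      rw [hx1 j, hx2 j] at this
      have hys : y j.succ = y' (j.val + 1) := by
        show y' (j.succ).val = y' (j.val + 1)
        rw [Fin.val_succ]
      have hyc : y j.castSucc = y' j.val := by
        show y' (j.castSucc).val = y' j.val
        rw [Fin.coe_castSucc]
      rw [hys, hyc]
      exact this
  refine ⟨y, hy_prop, ?_⟩
  intro z hz
  funext i
  refine Fin.induction ?_ ?_ i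
  · rw [hz.1, hy_prop.1]
  · intro j hj
    have h1 := hz.2 j
    have h2 := hy_prop.2 j
    have e1 : z j.succ - h • b (z j.succ) = z j.castSucc + x j.succ - x j.castSucc := by
      nth_rewrite 1 [h1]; abel
    have e2 : y j.succ - h • b (y j.succ) = y j.castSucc + x j.succ - x j.castSucc := by
      nth_rewrite 1 [h2]; abel
    apply hinj
    show z j.succ - h • b (z j.succ) = y j.succ - h • b (y j.succ)
    rw [e1, e2, hj]
end

section
/- Let b : ℝ^d → ℝ^d satisfy a one-sided Lipschitz condition with constant C_b, let x ∈ ℝ^d, h > 0, and suppose ŷ, ŷ⁺ ∈ ℝ^d satisfy ŷ⁺ = ŷ + h b(ŷ⁺ + x). Then |ŷ⁺| − |ŷ| ≤ C_b h |ŷ⁺| + h |b(x)|. -/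
open scoped RealInnerProductSpace

/-- One-step estimate for the shifted implicit Euler recursion
`yhat⁺ = yhat + h b(yhat⁺ + x)`: `‖yhat⁺‖ - ‖yhat‖ ≤ C_b h ‖yhat⁺‖ + h ‖b x‖`. -/
theorem implicit_euler_one_step_estimate {d : ℕ}
    (b : EuclideanSpace ℝ (Fin d) → EuclideanSpace ℝ (Fin d))
    (C_b : ℝ) (hCb : 0 ≤ C_b)
    (hb : ∀ ς ζ : EuclideanSpace ℝ (Fin d),
      ⟪b ς - b ζ, ς - ζ⟫ ≤ C_b * ‖ς - ζ‖ ^ 2)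
    (x : EuclideanSpace ℝ (Fin d)) (h : ℝ) (hh : 0 < h)
    (yhat yplus : EuclideanSpace ℝ (Fin d))
    (hstep : yplus = yhat + h • b (yplus + x)) :
    ‖yplus‖ - ‖yhat‖ ≤ C_b * h * ‖yplus‖ + h * ‖b x‖ := by
  have hlip : ⟪b (yplus + x) - b x, yplus⟫ ≤ C_b * ‖yplus‖ ^ 2 := by
    have := hb (yplus + x) x
    simpa [add_sub_cancel_right] using this
  have hexp : ‖yplus‖ ^ 2 = ⟪yhat, yplus⟫ + h * ⟪b (yplus + x) - b x, yplus⟫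
      + h * ⟪b x, yplus⟫ := by
    have : (‖yplus‖ : ℝ) ^ 2 = ⟪yplus, yplus⟫ := (real_inner_self_eq_norm_sq yplus).symm
    rw [this]
    nth_rewrite 1 [hstep]
    rw [inner_add_left, inner_sub_left, real_inner_smul_left]
    ring
  have h1 : ⟪yhat, yplus⟫ ≤ ‖yhat‖ * ‖yplus‖ := real_inner_le_norm _ _
  have h2 : ⟪b x, yplus⟫ ≤ ‖b x‖ * ‖yplus‖ := real_inner_le_norm _ _
  have key : ‖yplus‖ ^ 2 ≤ ‖yhat‖ * ‖yplus‖ + h * (C_b * ‖yplus‖ ^ 2)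
      + h * (‖b x‖ * ‖yplus‖) := by
    nlinarith [mul_le_mul_of_nonneg_left hlip hh.le, mul_le_mul_of_nonneg_left h2 hh.le]
  rcases eq_or_lt_of_le (norm_nonneg yplus) with h0 | h0
  · have : ‖yplus‖ = 0 := h0.symm
    rw [this]
    have : 0 ≤ C_b * h * 0 + h * ‖b x‖ := by positivity
    linarith [norm_nonneg yhat]
  · nlinarith [key, h0]
end

section
/- Let b : ℝ^d → ℝ^d satisfy a one-sided Lipschitz condition with constant C_b. Let T > 0, N ∈ ℕ, h = T/N with 2 C_b h ≤ 1, and t_j = j h. Let (x_j)_{0 ≤ j ≤ N} be a sequence in ℝ^d and let (y_j)_{0 ≤ j ≤ N} satisfy y_0 = ξ and y_{j+1} = y_j + h b(y_{j+1}) + x_{j+1} − x_j for all j ∈ {0, …, N−1}, where ξ ∈ ℝ^d and x_0 = 0. Then max_{0 ≤ n ≤ N} |y_n| ≤ 2 e^{2 C_b T} ( |ξ| + T · max_{1 ≤ n ≤ N} |b(x_n)| ) + max_{0 ≤ n ≤ N} |x_n|. -/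
open scoped RealInnerProductSpace

set_option maxHeartbeats 1000000 in
/-- Uniform bound for the implicit Euler scheme
`y_{j+1} = y_j + h b(y_{j+1}) + x_{j+1} - x_j`, `y_0 = ξ`, `x_0 = 0`,
under `2 C_b h ≤ 1`:
`max_n ‖y_n‖ ≤ 2 e^{2 C_b T}(‖ξ‖ + T max_{1≤n≤N} ‖b(x_n)‖) + max_n ‖x_n‖`. -/
theorem implicit_euler_uniform_bound {d : ℕ}
    (b : EuclideanSpace ℝ (Fin d) → EuclideanSpace ℝ (Fin d))
    (C_b : ℝ) (hCb : 0 ≤ C_b)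
    (hb : ∀ ς ζ : EuclideanSpace ℝ (Fin d),
      ⟪b ς - b ζ, ς - ζ⟫ ≤ C_b * ‖ς - ζ‖ ^ 2)
    (T : ℝ) (hT : 0 < T) (N : ℕ) (hN : 1 ≤ N)
    (h : ℝ) (hh : h = T / N) (hCh : 2 * C_b * h ≤ 1)
    (ξ : EuclideanSpace ℝ (Fin d))
    (x : ℕ → EuclideanSpace ℝ (Fin d)) (hx0 : x 0 = 0)
    (y : ℕ → EuclideanSpace ℝ (Fin d)) (hy0 : y 0 = ξ)
    (hstep : ∀ j < N, y (j + 1) = y j + h • b (y (j + 1)) + x (j + 1) - x j) :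
    ∀ n ≤ N, ‖y n‖ ≤
      2 * Real.exp (2 * C_b * T) *
        (‖ξ‖ + T * (Finset.Icc 1 N).sup' (Finset.nonempty_Icc.mpr hN)
          (fun j => ‖b (x j)‖)) +
      (Finset.Icc 0 N).sup' (Finset.nonempty_Icc.mpr (Nat.zero_le N))
        (fun j => ‖x j‖) := by
  have hN0 : (0:ℝ) < N := by exact_mod_cast Nat.pos_of_ne_zero (by omega)
  have hh0 : 0 < h := hh ▸ div_pos hT hN0
  set M := (Finset.Icc 1 N).sup' (Finset.nonempty_Icc.mpr hN)
      (fun j => ‖b (x j)‖) with hMdef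
  set X := (Finset.Icc 0 N).sup' (Finset.nonempty_Icc.mpr (Nat.zero_le N))
      (fun j => ‖x j‖) with hXdef
  have hM0 : 0 ≤ M := le_trans (norm_nonneg (b (x 1)))
    (Finset.le_sup' (fun j => ‖b (x j)‖) (by simp [hN]))
  have hMle : ∀ j, 1 ≤ j → j ≤ N → ‖b (x j)‖ ≤ M := fun j h1 h2 =>
    Finset.le_sup' (fun j => ‖b (x j)‖) (Finset.mem_Icc.mpr ⟨h1, h2⟩)
  set z : ℕ → EuclideanSpace ℝ (Fin d) := fun n => y n - x n with hzdef
  have hzn : ∀ n, z n = y n - x n := fun n => rfl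
  have hz0 : z 0 = ξ := by rw [hzn, hy0, hx0, sub_zero]
  have hstepz : ∀ j < N, z (j + 1) = z j + h • b (y (j + 1)) := by
    intro j hj
    rw [hzn, hzn]
    nth_rewrite 1 [hstep j hj]
    abel
  have hhN : h * N = T := by
    rw [hh]; field_simp
  -- key step estimate
  have key : ∀ j < N, ‖z (j + 1)‖ ≤ Real.exp (2 * C_b * h) * (‖z j‖ + h * M) := by
    intro j hj
    have ha0 : (0:ℝ) ≤ ‖z (j + 1)‖ := norm_nonneg _
    have hyx : y (j + 1) - x (j + 1) = z (j + 1) := (hzn _).symm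
    have hsq : ‖z (j + 1)‖ ^ 2
        = ⟪z (j + 1), z j⟫ + h * ⟪z (j + 1), b (y (j + 1))⟫ := by
      have e := inner_add_right (𝕜 := ℝ) (z (j + 1)) (z j) (h • b (y (j + 1)))
      rw [← hstepz j hj, real_inner_smul_right] at e
      rw [← real_inner_self_eq_norm_sq, e]
    have h1 : ⟪z (j + 1), z j⟫ ≤ ‖z (j + 1)‖ * ‖z j‖ := real_inner_le_norm _ _
    have h2 : ⟪z (j + 1), b (y (j + 1))⟫
        ≤ C_b * ‖z (j + 1)‖ ^ 2 + M * ‖z (j + 1)‖ := by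
      have e1 : ⟪b (y (j + 1)) - b (x (j + 1)), z (j + 1)⟫ =
          ⟪z (j + 1), b (y (j + 1))⟫ - ⟪b (x (j + 1)), z (j + 1)⟫ := by
        rw [inner_sub_left, real_inner_comm (b (y (j + 1)))]
      have hcb := hb (y (j + 1)) (x (j + 1))
      rw [hyx, e1] at hcb
      have hcs : ⟪b (x (j + 1)), z (j + 1)⟫ ≤ M * ‖z (j + 1)‖ := by
        calc ⟪b (x (j + 1)), z (j + 1)⟫ ≤ ‖b (x (j + 1))‖ * ‖z (j + 1)‖ :=
              real_inner_le_norm _ _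
        _ ≤ M * ‖z (j + 1)‖ :=
              mul_le_mul_of_nonneg_right (hMle (j + 1) (by omega) (by omega)) ha0
      linarith
    have hquad : ‖z (j + 1)‖ ^ 2 ≤ ‖z (j + 1)‖ * ‖z j‖
        + h * (C_b * ‖z (j + 1)‖ ^ 2 + M * ‖z (j + 1)‖) := by
      have := mul_le_mul_of_nonneg_left h2 hh0.le
      linarith
    have hlin : (1 - C_b * h) * ‖z (j + 1)‖ ≤ ‖z j‖ + h * M := by
      rcases eq_or_lt_of_le ha0 with heq | hpos
      · rw [← heq, mul_zero]
        positivity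
      · have hq2 : (1 - C_b * h) * ‖z (j + 1)‖ * ‖z (j + 1)‖
            ≤ (‖z j‖ + h * M) * ‖z (j + 1)‖ := by nlinarith
        exact le_of_mul_le_mul_right hq2 hpos
    have hexp : (1 : ℝ) + 2 * C_b * h ≤ Real.exp (2 * C_b * h) := by
      linarith [Real.add_one_le_exp (2 * C_b * h)]
    have hR0 : 0 ≤ ‖z j‖ + h * M := by positivity
    have hc0 : 0 ≤ C_b * h := mul_nonneg hCb hh0.le
    have h3 : (1 + 2 * (C_b * h)) * ((1 - C_b * h) * ‖z (j + 1)‖)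
        ≤ (1 + 2 * (C_b * h)) * (‖z j‖ + h * M) :=
      mul_le_mul_of_nonneg_left hlin (by linarith)
    have h4 : ‖z (j + 1)‖ ≤ (1 + 2 * (C_b * h)) * ((1 - C_b * h) * ‖z (j + 1)‖) := by
      nlinarith [mul_nonneg (mul_nonneg hc0 ha0)
        (by linarith : (0:ℝ) ≤ 1 - 2 * (C_b * h))]
    have h5 : (1 + 2 * (C_b * h)) * (‖z j‖ + h * M)
        ≤ Real.exp (2 * C_b * h) * (‖z j‖ + h * M) :=
      mul_le_mul_of_nonneg_right (by linarith) hR0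
    linarith
  -- induction
  have bound : ∀ n ≤ N, ‖z n‖ ≤ Real.exp (2 * C_b * h * n) * (‖ξ‖ + n * h * M) := by
    intro n
    induction n with
    | zero => intro _; simp [hz0]
    | succ k ih =>
      intro hk
      have hk' : k < N := by omega
      have ihk := ih (le_of_lt hk')
      have hE1 : (1:ℝ) ≤ Real.exp (2 * C_b * h * k) :=
        Real.one_le_exp (by positivity)
      have hhM : (0:ℝ) ≤ h * M := by positivity
      have hEsplit : Real.exp (2 * C_b * h * ((k:ℝ) + 1)) =
          Real.exp (2 * C_b * h) * Real.exp (2 * C_b * h * k) := by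
        rw [← Real.exp_add]; ring_nf
      have hin : Real.exp (2 * C_b * h * k) * (‖ξ‖ + k * h * M) + h * M
          ≤ Real.exp (2 * C_b * h * k) * (‖ξ‖ + ((k:ℝ) + 1) * h * M) := by
        nlinarith [mul_nonneg (sub_nonneg.mpr hE1) hhM]
      calc ‖z (k + 1)‖ ≤ Real.exp (2 * C_b * h) * (‖z k‖ + h * M) := key k hk'
      _ ≤ Real.exp (2 * C_b * h) *
          (Real.exp (2 * C_b * h * k) * (‖ξ‖ + k * h * M) + h * M) := by
          apply mul_le_mul_of_nonneg_left _ (Real.exp_nonneg _)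
          linarith
      _ ≤ Real.exp (2 * C_b * h) *
          (Real.exp (2 * C_b * h * k) * (‖ξ‖ + ((k:ℝ) + 1) * h * M)) :=
          mul_le_mul_of_nonneg_left hin (Real.exp_nonneg _)
      _ = Real.exp (2 * C_b * h * ((k:ℕ) + 1 : ℕ)) * (‖ξ‖ + ((k:ℕ) + 1 : ℕ) * h * M) := by
          push_cast
          rw [hEsplit]
          ring
  intro n hn
  have hzb := bound n hn
  have hXn : ‖x n‖ ≤ X :=
    Finset.le_sup' (fun j => ‖x j‖) (Finset.mem_Icc.mpr ⟨Nat.zero_le n, hn⟩)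
  have hyzx : ‖y n‖ ≤ ‖z n‖ + ‖x n‖ := by
    have hy : y n = z n + x n := by rw [hzn]; abel
    rw [hy]; exact norm_add_le _ _
  have hnh : (n : ℝ) * h ≤ T := by
    rw [← hhN]
    have : (n:ℝ) ≤ N := by exact_mod_cast hn
    nlinarith
  have hexpmono : Real.exp (2 * C_b * h * n) ≤ Real.exp (2 * C_b * T) := by
    apply Real.exp_le_exp.mpr
    nlinarith
  have harg : ‖ξ‖ + (n:ℝ) * h * M ≤ ‖ξ‖ + T * M := by nlinarith
  have hzT : ‖z n‖ ≤ Real.exp (2 * C_b * T) * (‖ξ‖ + T * M) := by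
    calc ‖z n‖ ≤ Real.exp (2 * C_b * h * n) * (‖ξ‖ + n * h * M) := hzb
    _ ≤ Real.exp (2 * C_b * T) * (‖ξ‖ + T * M) := by
        apply mul_le_mul hexpmono harg _ (Real.exp_nonneg _)
        positivity
  have hE0 : 0 ≤ Real.exp (2 * C_b * T) := Real.exp_nonneg _
  have harg0 : 0 ≤ ‖ξ‖ + T * M := by positivity
  nlinarith [mul_nonneg hE0 harg0]
end

section
/- Let T > 0, p ∈ [1,∞), and let b : ℝ^d → ℝ^d satisfy a one-sided Lipschitz condition with constant C_b. Let x : [0,T] → ℝ^d be continuous, ξ ∈ ℝ^d, and suppose y : [0,T] → ℝ^d is a continuous solution of y(t) = ξ + ∫₀ᵗ b(y(s)) ds + x(t) − x(0) such that M := ‖b ∘ y‖_{p-var;[0,T]} < ∞, i.e. for every finite partition 0 = s_0 < s_1 < … < s_k = T one has Σ_i |b(y(s_{i+1})) − b(y(s_i))|^p ≤ M^p. Let N ∈ ℕ, h = T/N with 2 C_b h ≤ 1, t_n = n h, and let (y_n)_{0 ≤ n ≤ N} satisfy y_0 = ξ and y_{n+1} = y_n + h b(y_{n+1}) + x(t_{n+1})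 − x(t_n). Then max_{0 ≤ n ≤ N} |y(t_n) − y_n| ≤ 2 T^{1 − 1/p} e^{2 C_b T} M h^{1/p}. -/
open scoped RealInnerProductSpace

section Aux

variable {E : Type*} [NormedAddCommGroup E]

lemma rpow_le_cancel {p x y : ℝ} (hx : 0 ≤ x) (hy : 0 ≤ y) (hp : 0 < p)
    (hle : x ^ p ≤ y ^ p) : x ≤ y := by
  by_contra hc
  push_neg at hc
  exact absurd hle (not_le.2 (Real.rpow_lt_rpow hy hc hp))

/-- Extracting pair-oscillations from the p-variation bound. -/
lemma pairSum (φ : ℝ → E) (T M p : ℝ) (hT : 0 ≤ T) (hM0 : 0 ≤ M) (hp : 0 < p)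
    (hvar : ∀ (k : ℕ) (s : Fin (k + 1) → ℝ), Monotone s → s 0 = 0 →
      s (Fin.last k) = T →
      ∑ i : Fin k, ‖φ (s i.succ) - φ (s i.castSucc)‖ ^ p ≤ M ^ p)
    (k : ℕ) (a c : ℕ → ℝ)
    (h0 : ∀ j < k, 0 ≤ a j) (hac : ∀ j < k, a j ≤ c j) (hcT : ∀ j < k, c j ≤ T)
    (hchain : ∀ j, j + 1 < k → c j ≤ a (j + 1)) :
    ∑ j ∈ Finset.range k, ‖φ (c j) - φ (a j)‖ ^ p ≤ M ^ p := by
  rcases Nat.eq_zero_or_pos k with rfl | hk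
  · simpa using Real.rpow_nonneg hM0 p
  set u : ℕ → ℝ := fun m =>
    if m = 0 then 0 else if m ≤ 2 * k then (if m % 2 = 1 then a (m / 2) else c (m / 2 - 1))
      else T with hu
  have hu0 : u 0 = 0 := by simp [hu]
  have huodd : ∀ j, j < k → u (2 * j + 1) = a j := by
    intro j hj
    have h1 : ¬(2 * j + 1 = 0) := by omega
    have h2 : 2 * j + 1 ≤ 2 * k := by omega
    have h3 : (2 * j + 1) % 2 = 1 := by omega
    have h4 : (2 * j + 1) / 2 = j := by omega
    simp only [hu, if_neg h1, if_pos h2, if_pos h3, h4]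
  have hueven : ∀ j, j < k → u (2 * j + 2) = c j := by
    intro j hj
    have h1 : ¬(2 * j + 2 = 0) := by omega
    have h2 : 2 * j + 2 ≤ 2 * k := by omega
    have h3 : ¬((2 * j + 2) % 2 = 1) := by omega
    have h4 : (2 * j + 2) / 2 - 1 = j := by omega
    simp only [hu, if_neg h1, if_pos h2, if_neg h3, h4]
  have huT : ∀ m, 2 * k + 1 ≤ m → u m = T := by
    intro m hm
    have h1 : ¬(m = 0) := by omega
    have h2 : ¬(m ≤ 2 * k) := by omega
    simp only [hu, if_neg h1, if_neg h2]
  have humono : Monotone u := by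
    apply monotone_nat_of_le_succ
    intro m
    rcases Nat.even_or_odd m with ⟨j, hj⟩ | ⟨j, hj⟩
    · -- m = 2 j
      rcases Nat.eq_zero_or_pos j with rfl | hj0
      · -- m = 0
        have : m = 0 := by omega
        subst this
        rw [hu0, show (0:ℕ)+1 = 2*0+1 by ring, huodd 0 hk]
        exact h0 0 hk
      · rcases le_or_gt j k with hjk | hjk
        · have hm : m = 2 * (j - 1) + 2 := by omega
          rw [hm, hueven (j-1) (by omega)]
          rcases lt_or_eq_of_le hjk with hlt | rfl
          · rw [show 2*(j-1)+2+1 = 2*j+1 by omega, huodd j hlt]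
            have := hchain (j - 1) (by omega)
            rwa [show j - 1 + 1 = j by omega] at this
          · rw [huT _ (by omega)]
            exact hcT (j-1) (by omega)
        · rw [huT _ (by omega), huT _ (by omega)]
    · -- m = 2 j + 1
      rcases lt_or_ge j k with hjk | hjk
      · rw [hj, huodd j hjk, show 2*j+1+1 = 2*j+2 by ring, hueven j hjk]
        exact hac j hjk
      · rw [huT _ (by omega), huT _ (by omega)]
  -- apply hvar with 2k+1 intervals
  have key := hvar (2 * k + 1) (fun i => u i.val)
    (fun i j hij => humono hij) (by simpa using hu0)
    (by simpa using huT (2 * k + 1) le_rfl)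
  -- compare sums
  set g : Fin (2 * k + 1) → ℝ := fun i => ‖φ (u (i.val + 1)) - φ (u i.val)‖ ^ p with hg
  have hkey2 : ∑ i : Fin (2 * k + 1), g i ≤ M ^ p := by
    refine le_trans (le_of_eq (Finset.sum_congr rfl fun i _ => ?_)) key
    rfl
  set e : ℕ → Fin (2 * k + 1) := fun j => ⟨min (2 * j + 1) (2 * k), by omega⟩ with he
  have heval : ∀ j, j < k → (e j).val = 2 * j + 1 := by
    intro j hj; simp only [he]; omega
  calc ∑ j ∈ Finset.range k, ‖φ (c j) - φ (a j)‖ ^ p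
      = ∑ j ∈ Finset.range k, g (e j) := by
        refine Finset.sum_congr rfl fun j hj => ?_
        have hj' := Finset.mem_range.mp hj
        have hm : (2 * j + 1) ⊓ (2 * k) = 2 * j + 1 := by omega
        simp only [hg, he, hm]
        rw [show 2*j+1+1 = 2*j+2 by ring, huodd j hj', hueven j hj']
    _ = ∑ i ∈ (Finset.range k).image e, g i := by
        rw [Finset.sum_image]
        intro x hx y hy hxy
        have hx' := heval x (Finset.mem_range.mp hx)
        have hy' := heval y (Finset.mem_range.mp hy)
        have : (e x).val = (e y).val := by rw [hxy]
        omega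
    _ ≤ ∑ i : Fin (2 * k + 1), g i := by
        apply Finset.sum_le_sum_of_subset_of_nonneg (Finset.subset_univ _)
        intro i _ _
        exact Real.rpow_nonneg (norm_nonneg _) p
    _ ≤ M ^ p := hkey2

open MeasureTheory in
lemma pvar_intervalIntegrable {d : ℕ} (φ : ℝ → EuclideanSpace ℝ (Fin d)) (T M p : ℝ)
    (hT : 0 ≤ T) (hM0 : 0 ≤ M) (hp : 1 ≤ p)
    (hvar : ∀ (k : ℕ) (s : Fin (k + 1) → ℝ), Monotone s → s 0 = 0 →
      s (Fin.last k) = T →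
      ∑ i : Fin k, ‖φ (s i.succ) - φ (s i.castSucc)‖ ^ p ≤ M ^ p) :
    ∀ u v : ℝ, 0 ≤ u → u ≤ v → v ≤ T → IntervalIntegrable φ volume u v := by
  have hp0 : 0 < p := lt_of_lt_of_le one_pos hp
  -- oscillation bound between any two points
  have hosc : ∀ s t : ℝ, 0 ≤ s → s ≤ t → t ≤ T → ‖φ t - φ s‖ ≤ M := by
    intro s t hs hst htT
    have := pairSum φ T M p hT hM0 hp0 hvar 1 (fun _ => s) (fun _ => t)
      (fun j _ => hs) (fun j _ => hst) (fun j _ => htT) (fun j hj => by omega)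
    simp only [Finset.range_one, Finset.sum_singleton] at this
    exact rpow_le_cancel (norm_nonneg _) hM0 hp0 this
  have hbd : ∀ s : ℝ, 0 ≤ s → s ≤ T → ‖φ s‖ ≤ ‖φ 0‖ + M := by
    intro s hs hsT
    have h1 : φ s = φ 0 + (φ s - φ 0) := by abel
    calc ‖φ s‖ = ‖φ 0 + (φ s - φ 0)‖ := by rw [← h1]
      _ ≤ ‖φ 0‖ + ‖φ s - φ 0‖ := norm_add_le _ _
      _ ≤ ‖φ 0‖ + M := by
          have := hosc 0 s le_rfl hs hsT
          linarith
  -- the sets of ε-oscillation points are finite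
  set D : ℕ → Set ℝ := fun m =>
    {t | t ∈ Set.Icc 0 T ∧ ∀ δ > 0, ∃ s ∈ Set.Icc 0 T,
      |s - t| < δ ∧ 1 / ((m : ℝ) + 1) ≤ ‖φ s - φ t‖} with hD
  have hfin : ∀ m : ℕ, (D m).Finite := by
    intro m
    set ε : ℝ := 1 / ((m : ℝ) + 1) with hε
    have hεpos : 0 < ε := by positivity
    by_contra hfin'
    have hinf : (D m).Infinite := hfin'
    obtain ⟨K, hK⟩ := exists_nat_gt ((M / ε) ^ p)
    obtain ⟨F, hFsub, hFcard⟩ := hinf.exists_subset_card_eq (K + 2)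
    set n := K + 1 with hn
    have hcard : F.card = n + 1 := hFcard
    set eo := F.orderIsoOfFin hcard with heo
    set t : Fin (n + 1) → ℝ := fun i => (eo i : ℝ) with ht
    have htmono : StrictMono t := fun i j hij => Subtype.coe_lt_coe.2 (eo.strictMono hij)
    haveI : Nonempty (Fin n) := ⟨⟨0, by omega⟩⟩
    set δ : ℝ := Finset.univ.inf' Finset.univ_nonempty
      (fun i : Fin n => t i.succ - t i.castSucc) with hδ
    have hδpos : 0 < δ := by
      rw [hδ, Finset.lt_inf'_iff]
      exact fun i _ => sub_pos.2 (htmono (Fin.castSucc_lt_succ : i.castSucc < i.succ))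
    have hmem : ∀ i : Fin (n + 1), t i ∈ D m := fun i => hFsub (Finset.mem_coe.2 (eo i).2)
    have hchoice : ∀ i : Fin (n + 1), ∃ s, s ∈ Set.Icc 0 T ∧
        |s - t i| < δ / 2 ∧ ε ≤ ‖φ s - φ (t i)‖ := by
      intro i
      obtain ⟨s, hs1, hs2, hs3⟩ := (hmem i).2 (δ / 2) (half_pos hδpos)
      exact ⟨s, hs1, hs2, hs3⟩
    choose σ hσIcc hσnear hσbig using hchoice
    have hgap : ∀ j : ℕ, (hj : j + 1 < n + 1) → δ ≤ t ⟨j + 1, hj⟩ - t ⟨j, by omega⟩ := by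
      intro j hj
      have h1 : δ ≤ (fun i : Fin n => t i.succ - t i.castSucc) ⟨j, by omega⟩ :=
        Finset.inf'_le _ (Finset.mem_univ _)
      exact h1
    set a : ℕ → ℝ := fun j => if hj : j < n + 1 then min (σ ⟨j, hj⟩) (t ⟨j, hj⟩) else T with ha
    set c : ℕ → ℝ := fun j => if hj : j < n + 1 then max (σ ⟨j, hj⟩) (t ⟨j, hj⟩) else T with hc
    have haval : ∀ j (hj : j < n + 1), a j = min (σ ⟨j, hj⟩) (t ⟨j, hj⟩) := by
      intro j hj; simp only [ha, dif_pos hj]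
    have hcval : ∀ j (hj : j < n + 1), c j = max (σ ⟨j, hj⟩) (t ⟨j, hj⟩) := by
      intro j hj; simp only [hc, dif_pos hj]
    have hsum := pairSum φ T M p hT hM0 hp0 hvar (n + 1) a c
      (by
        intro j hj
        rw [haval j hj]
        exact le_min (hσIcc _).1 ((hmem _).1).1)
      (by intro j hj; rw [haval j hj, hcval j hj]; exact min_le_max)
      (by
        intro j hj
        rw [hcval j hj]
        exact max_le (hσIcc _).2 ((hmem _).1).2)
      (by
        intro j hj
        rw [hcval j (by omega), haval (j+1) hj]
        have h1 := abs_lt.1 (hσnear ⟨j, by omega⟩)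
        have h2 := abs_lt.1 (hσnear ⟨j + 1, hj⟩)
        have h3 := hgap j hj
        have hub : σ ⟨j, by omega⟩ ⊔ t ⟨j, by omega⟩ ≤ t ⟨j, by omega⟩ + δ / 2 :=
          max_le (by linarith [h1.2]) (by linarith)
        have hlb : t ⟨j + 1, hj⟩ - δ / 2 ≤ σ ⟨j + 1, hj⟩ ⊓ t ⟨j + 1, hj⟩ :=
          le_min (by linarith [h2.1]) (by linarith)
        linarith)
    -- each pair oscillation is at least ε
    have hterm : ∀ j ∈ Finset.range (n + 1), ε ^ p ≤ ‖φ (c j) - φ (a j)‖ ^ p := by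
      intro j hj
      have hj' := Finset.mem_range.mp hj
      rw [haval j hj', hcval j hj']
      refine Real.rpow_le_rpow hεpos.le ?_ hp0.le
      rcases le_total (σ ⟨j, hj'⟩) (t ⟨j, hj'⟩) with hle | hle
      · rw [min_eq_left hle, max_eq_right hle, norm_sub_rev]
        exact hσbig _
      · rw [min_eq_right hle, max_eq_left hle]
        exact hσbig _
    have hsum2 : ((n : ℝ) + 1) * ε ^ p ≤ M ^ p := by
      have he1 : ∑ _j ∈ Finset.range (n + 1), ε ^ p = ((n : ℝ) + 1) * ε ^ p := by
        rw [Finset.sum_const, Finset.card_range, nsmul_eq_mul]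
        push_cast
        ring
      rw [← he1]
      exact le_trans (Finset.sum_le_sum hterm) hsum
    have hεp : 0 < ε ^ p := Real.rpow_pos_of_pos hεpos p
    have hdiv : ((n : ℝ) + 1) ≤ (M / ε) ^ p := by
      rw [Real.div_rpow hM0 hεpos.le]
      rw [le_div_iff₀ hεp]
      exact hsum2
    have : ((n : ℝ) + 1) < K := lt_of_le_of_lt hdiv hK
    rw [hn] at this
    push_cast at this
    linarith
  -- the union of oscillation sets
  set Dall : Set ℝ := ⋃ m : ℕ, D m with hDall
  have hDcnt : Dall.Countable := Set.countable_iUnion fun m => (hfin m).countable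
  have hDnull : volume Dall = 0 := hDcnt.measure_zero _
  set S : Set ℝ := Set.Icc 0 T \ Dall with hS
  have hSm : MeasurableSet S := measurableSet_Icc.diff hDcnt.measurableSet
  have hcont : ContinuousOn φ S := by
    intro t htS
    rw [Metric.continuousWithinAt_iff]
    intro ε' hε'
    obtain ⟨m, hm⟩ := exists_nat_one_div_lt hε'
    have hnot : t ∉ D m := fun hc => htS.2 (Set.mem_iUnion.2 ⟨m, hc⟩)
    have hnot2 : ¬ ∀ δ > 0, ∃ s ∈ Set.Icc 0 T,
        |s - t| < δ ∧ 1 / ((m : ℝ) + 1) ≤ ‖φ s - φ t‖ := fun hc => hnot ⟨htS.1, hc⟩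
    push_neg at hnot2
    obtain ⟨δ', hδ', hpr⟩ := hnot2
    refine ⟨δ', hδ', fun {s} hsS hdist => ?_⟩
    have h1 := hpr s hsS.1 (by rwa [Real.dist_eq] at hdist)
    rw [dist_eq_norm]
    exact lt_trans h1 hm
  have hsm : AEStronglyMeasurable φ (volume.restrict S) := hcont.aestronglyMeasurable hSm
  have hre : volume.restrict (Set.Icc (0:ℝ) T) = volume.restrict S := by
    refine Measure.restrict_congr_set ?_
    rw [MeasureTheory.ae_eq_set]
    constructor
    · refine measure_mono_null (fun z hz => ?_) hDnull
      rcases hz with ⟨hz1, hz2⟩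
      by_contra hzD
      exact hz2 ⟨hz1, hzD⟩
    · rw [Set.diff_eq_empty.mpr Set.diff_subset]
      exact measure_empty
  have hmeas : AEStronglyMeasurable φ (volume.restrict (Set.Icc (0:ℝ) T)) := hre ▸ hsm
  intro u v hu huv hvT
  rw [intervalIntegrable_iff_integrableOn_Ioc_of_le huv]
  refine ⟨hmeas.mono_measure (Measure.restrict_mono ?_ le_rfl), ?_⟩
  · exact fun s hs => ⟨le_trans hu hs.1.le, le_trans hs.2 hvT⟩
  · refine HasFiniteIntegral.restrict_of_bounded (C := ‖φ 0‖ + M) measure_Ioc_lt_top ?_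
    refine (ae_restrict_iff' measurableSet_Ioc).2 (Filter.Eventually.of_forall fun s hs => ?_)
    exact hbd s (le_trans hu hs.1.le) (le_trans hs.2 hvT)

end Aux

set_option maxHeartbeats 1000000 in
/-- Convergence of the implicit Euler scheme, `p`-variation case: if the exact
solution satisfies `‖b ∘ y‖_{p-var;[0,T]} ≤ M`, then
`max_n ‖y(t_n) - y_n‖ ≤ 2 T^{1-1/p} e^{2 C_b T} M h^{1/p}`. -/
theorem implicit_euler_rate_p_variation {d : ℕ} (T : ℝ) (hT : 0 < T)
    (p : ℝ) (hp : 1 ≤ p)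
    (b : EuclideanSpace ℝ (Fin d) → EuclideanSpace ℝ (Fin d))
    (C_b : ℝ) (hCb : 0 ≤ C_b)
    (hb : ∀ ς ζ : EuclideanSpace ℝ (Fin d),
      ⟪b ς - b ζ, ς - ζ⟫ ≤ C_b * ‖ς - ζ‖ ^ 2)
    (x : ℝ → EuclideanSpace ℝ (Fin d)) (hx : ContinuousOn x (Set.Icc 0 T))
    (ξ : EuclideanSpace ℝ (Fin d))
    (y : ℝ → EuclideanSpace ℝ (Fin d)) (hy_cont : ContinuousOn y (Set.Icc 0 T))
    (hy_sol : ∀ t ∈ Set.Icc (0 : ℝ) T,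
      y t = ξ + (∫ s in (0 : ℝ)..t, b (y s)) + x t - x 0)
    (M : ℝ) (hM0 : 0 ≤ M)
    (hM : ∀ (k : ℕ) (s : Fin (k + 1) → ℝ), Monotone s → s 0 = 0 →
      s (Fin.last k) = T →
      ∑ i : Fin k, ‖b (y (s i.succ)) - b (y (s i.castSucc))‖ ^ p ≤ M ^ p)
    (N : ℕ) (hN : 1 ≤ N) (h : ℝ) (hh : h = T / N) (hCh : 2 * C_b * h ≤ 1)
    (yd : ℕ → EuclideanSpace ℝ (Fin d)) (hyd0 : yd 0 = ξ)
    (hstep : ∀ n < N,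
      yd (n + 1) = yd n + h • b (yd (n + 1)) + x ((n + 1) * h) - x (n * h)) :
    ∀ n ≤ N, ‖y (n * h) - yd n‖ ≤
      2 * T ^ (1 - 1 / p) * Real.exp (2 * C_b * T) * M * h ^ (1 / p) := by
  have hp0 : 0 < p := lt_of_lt_of_le one_pos hp
  have hNpos : (0:ℝ) < N := by exact_mod_cast hN
  have hNne : (N:ℝ) ≠ 0 := ne_of_gt hNpos
  have hhpos : 0 < h := by rw [hh]; positivity
  have hNh : (N:ℝ) * h = T := by rw [hh]; field_simp
  set φ : ℝ → EuclideanSpace ℝ (Fin d) := fun s => b (y s) with hφ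
  set t : ℕ → ℝ := fun i => (i:ℝ) * h with htdef
  have ht0 : t 0 = 0 := by simp [htdef]
  have htsucc : ∀ i : ℕ, t (i + 1) - t i = h := by
    intro i; simp only [htdef]; push_cast; ring
  have htmono : ∀ i : ℕ, t i ≤ t (i + 1) := by
    intro i; have := htsucc i; linarith
  have htnonneg : ∀ i : ℕ, 0 ≤ t i := by
    intro i; simp only [htdef]; positivity
  have htle : ∀ i : ℕ, i ≤ N → t i ≤ T := by
    intro i hi
    rw [← hNh]
    simp only [htdef]
    have : (i:ℝ) ≤ N := by exact_mod_cast hi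
    nlinarith
  have htmem : ∀ i : ℕ, i ≤ N → t i ∈ Set.Icc (0:ℝ) T := fun i hi => ⟨htnonneg i, htle i hi⟩
  have hvar : ∀ (k : ℕ) (s : Fin (k + 1) → ℝ), Monotone s → s 0 = 0 →
      s (Fin.last k) = T →
      ∑ i : Fin k, ‖φ (s i.succ) - φ (s i.castSucc)‖ ^ p ≤ M ^ p := hM
  have hint : ∀ u v : ℝ, 0 ≤ u → u ≤ v → v ≤ T → IntervalIntegrable φ MeasureTheory.volume u v :=
    pvar_intervalIntegrable φ T M p hT.le hM0 hp hvar
  have hosc : ∀ s u : ℝ, 0 ≤ s → s ≤ u → u ≤ T → ‖φ u - φ s‖ ≤ M := by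
    intro s u hs hsu huT
    have := pairSum φ T M p hT.le hM0 hp0 hvar 1 (fun _ => s) (fun _ => u)
      (fun j _ => hs) (fun j _ => hsu) (fun j _ => huT) (fun j hj => by omega)
    simp only [Finset.range_one, Finset.sum_singleton] at this
    exact rpow_le_cancel (norm_nonneg _) hM0 hp0 this
  -- the oscillation within each step
  set ω : ℕ → ℝ := fun i =>
    sSup ((fun s => ‖φ s - φ (t (i+1))‖) '' Set.Icc (t i) (t (i+1))) with hω
  have himgb : ∀ i : ℕ, i < N → ∀ z ∈ ((fun s => ‖φ s - φ (t (i+1))‖) '' Set.Icc (t i) (t (i+1))), z ≤ M := by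
    rintro i hi z ⟨s, hs, rfl⟩
    show ‖φ s - φ (t (i+1))‖ ≤ M
    rw [norm_sub_rev]
    exact hosc s (t (i+1)) (le_trans (htnonneg i) hs.1) hs.2 (htle (i+1) hi)
  have hbddA : ∀ i : ℕ, i < N →
      BddAbove ((fun s => ‖φ s - φ (t (i+1))‖) '' Set.Icc (t i) (t (i+1))) :=
    fun i hi => ⟨M, fun z hz => himgb i hi z hz⟩
  have hmemtop : ∀ i : ℕ, (0:ℝ) ∈ ((fun s => ‖φ s - φ (t (i+1))‖) '' Set.Icc (t i) (t (i+1))) := by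
    intro i
    exact ⟨t (i+1), ⟨htmono i, le_rfl⟩, by simp⟩
  have hωnonneg : ∀ i : ℕ, i < N → 0 ≤ ω i :=
    fun i hi => le_csSup (hbddA i hi) (hmemtop i)
  have hωle : ∀ i : ℕ, i < N → ∀ s ∈ Set.Icc (t i) (t (i+1)), ‖φ s - φ (t (i+1))‖ ≤ ω i :=
    fun i hi s hs => le_csSup (hbddA i hi) ⟨s, hs, rfl⟩
  -- the remainder terms
  set r : ℕ → EuclideanSpace ℝ (Fin d) := fun i =>
    (∫ s in t i..t (i+1), φ s) - h • φ (t (i+1)) with hr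
  have hrle : ∀ i : ℕ, i < N → ‖r i‖ ≤ h * ω i := by
    intro i hi
    have h0i : 0 ≤ t i := htnonneg i
    have hiT : t (i+1) ≤ T := htle (i+1) hi
    have hint1 : IntervalIntegrable φ MeasureTheory.volume (t i) (t (i+1)) :=
      hint _ _ h0i (htmono i) hiT
    have hconst : (∫ _s in t i..t (i+1), φ (t (i+1))) = (t (i+1) - t i) • φ (t (i+1)) :=
      intervalIntegral.integral_const _
    have hri : r i = ∫ s in t i..t (i+1), (φ s - φ (t (i+1))) := by
      rw [intervalIntegral.integral_sub hint1 intervalIntegrable_const, hconst, htsucc i, hr]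
    have hbound := intervalIntegral.norm_integral_le_of_norm_le_const
      (C := ω i) (a := t i) (b := t (i+1)) (f := fun s => φ s - φ (t (i+1))) ?_
    · rw [hri]
      have habs : |t (i+1) - t i| = h := by rw [htsucc i]; exact abs_of_pos hhpos
      rw [habs] at hbound
      linarith [hbound]
    · intro s hs
      rw [Set.uIoc_of_le (htmono i)] at hs
      exact hωle i hi s (Set.Ioc_subset_Icc_self hs)
  -- sum of oscillations
  have hsumω : ∑ i ∈ Finset.range N, ω i ≤ (N:ℝ) ^ (1 - 1/p) * M := by
    refine le_of_forall_pos_le_add ?_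
    intro ε0 hε0
    set ε : ℝ := ε0 / N with hεdef
    have hεpos : 0 < ε := by positivity
    set m : ℕ → ℝ := fun i => max (ω i - ε) 0 with hm
    have hmnonneg : ∀ i, 0 ≤ m i := fun i => le_max_right _ _
    have hchoice : ∀ i, i < N → ∃ s, s ∈ Set.Icc (t i) (t (i+1)) ∧
        m i ≤ ‖φ (t (i+1)) - φ s‖ := by
      intro i hi
      rcases lt_or_ge (m i) (ω i) with hlt | hge
      · obtain ⟨z, hz, hzgt⟩ := exists_lt_of_lt_csSup ⟨0, hmemtop i⟩ hlt
        obtain ⟨s, hsmem, rfl⟩ := hz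
        exact ⟨s, hsmem, by rw [norm_sub_rev]; exact hzgt.le⟩
      · rcases max_choice (ω i - ε) 0 with hc | hc
        · exfalso; rw [hm] at hge; simp only at hge; rw [hc] at hge; linarith
        · refine ⟨t (i+1), ⟨htmono i, le_rfl⟩, ?_⟩
          rw [hm]; simp only; rw [hc]; positivity
    choose σ hσmem hσge using hchoice
    set a : ℕ → ℝ := fun j => if hj : j < N then σ j hj else T with ha
    set c : ℕ → ℝ := fun j => if hj : j < N then t (j+1) else T with hc
    have hsum := pairSum φ T M p hT.le hM0 hp0 hvar N a c
      (by
        intro j hj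
        simp only [ha, dif_pos hj]
        exact le_trans (htnonneg j) (hσmem j hj).1)
      (by
        intro j hj
        simp only [ha, hc, dif_pos hj]
        exact (hσmem j hj).2)
      (by
        intro j hj
        simp only [hc, dif_pos hj]
        exact htle (j+1) hj)
      (by
        intro j hj
        simp only [ha, hc, dif_pos hj, dif_pos (show j < N by omega)]
        exact (hσmem (j+1) hj).1)
    have hYM : ∑ j ∈ Finset.range N, (m j) ^ p ≤ M ^ p := by
      refine le_trans (Finset.sum_le_sum ?_) hsum
      intro j hj
      have hj' := Finset.mem_range.mp hj
      refine Real.rpow_le_rpow (hmnonneg j) ?_ hp0.le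
      simp only [ha, hc, dif_pos hj']
      exact hσge j hj'
    -- power-mean inequality
    have hpm := Real.arith_mean_le_rpow_mean (Finset.range N)
      (fun _ => 1/(N:ℝ)) m (fun i _ => by positivity)
      (by rw [Finset.sum_const, Finset.card_range, nsmul_eq_mul]; field_simp)
      (fun i _ => hmnonneg i) hp
    have hX : ∑ i ∈ Finset.range N, m i ≤ (N:ℝ) ^ (1 - 1/p) * M := by
      have h1 : ∑ i ∈ Finset.range N, (1/(N:ℝ)) * m i
          = (1/(N:ℝ)) * ∑ i ∈ Finset.range N, m i := by rw [Finset.mul_sum]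
      have h2 : ∑ i ∈ Finset.range N, (1/(N:ℝ)) * m i ^ p
          = (1/(N:ℝ)) * ∑ i ∈ Finset.range N, m i ^ p := by rw [Finset.mul_sum]
      rw [h1, h2] at hpm
      have h3 : (1/(N:ℝ)) * ∑ i ∈ Finset.range N, m i ^ p ≤ (1/(N:ℝ)) * M ^ p :=
        mul_le_mul_of_nonneg_left hYM (by positivity)
      have h4 : ((1/(N:ℝ)) * ∑ i ∈ Finset.range N, m i ^ p) ^ (1/p)
          ≤ ((1/(N:ℝ)) * M ^ p) ^ (1/p) := by
        apply Real.rpow_le_rpow _ h3 (by positivity)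
        have : (0:ℝ) ≤ ∑ i ∈ Finset.range N, m i ^ p :=
          Finset.sum_nonneg fun i _ => Real.rpow_nonneg (hmnonneg i) p
        positivity
      have h5 : ((1/(N:ℝ)) * M ^ p) ^ (1/p) = (1/(N:ℝ)) ^ (1/p) * M := by
        rw [Real.mul_rpow (by positivity) (Real.rpow_nonneg hM0 p)]
        congr 1
        rw [← Real.rpow_mul hM0]
        rw [mul_one_div, div_self (ne_of_gt hp0), Real.rpow_one]
      have h6 : (1/(N:ℝ)) * ∑ i ∈ Finset.range N, m i ≤ (1/(N:ℝ)) ^ (1/p) * M :=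
        le_trans (le_trans hpm h4) (le_of_eq h5)
      have hNid : (N:ℝ) * (1/(N:ℝ)) ^ (1/p) = (N:ℝ) ^ (1 - 1/p) := by
        rw [one_div, Real.inv_rpow hNpos.le, ← Real.rpow_neg hNpos.le,
          show (1 - 1/p) = 1 + (-(1/p)) by ring, Real.rpow_add hNpos, Real.rpow_one]
      have h7 : ∑ i ∈ Finset.range N, m i ≤ (N:ℝ) * ((1/(N:ℝ)) ^ (1/p) * M) :=
        calc ∑ i ∈ Finset.range N, m i
            = (N:ℝ) * ((1/(N:ℝ)) * ∑ i ∈ Finset.range N, m i) := by field_simp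
          _ ≤ (N:ℝ) * ((1/(N:ℝ)) ^ (1/p) * M) := mul_le_mul_of_nonneg_left h6 hNpos.le
      refine le_trans h7 (le_of_eq ?_)
      rw [← mul_assoc, hNid]
    -- conclude
    have h8 : ∑ i ∈ Finset.range N, ω i ≤ (∑ i ∈ Finset.range N, m i) + (N:ℝ) * ε := by
      have : ∀ i ∈ Finset.range N, ω i ≤ m i + ε := by
        intro i _
        have := le_max_left (ω i - ε) 0
        rw [hm]; simp only; linarith
      calc ∑ i ∈ Finset.range N, ω i ≤ ∑ i ∈ Finset.range N, (m i + ε) := Finset.sum_le_sum this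
        _ = (∑ i ∈ Finset.range N, m i) + (N:ℝ) * ε := by
            rw [Finset.sum_add_distrib, Finset.sum_const, Finset.card_range, nsmul_eq_mul]
    have h9 : (N:ℝ) * ε = ε0 := by rw [hεdef]; field_simp
    linarith
  -- initial error is zero
  have he0 : y (t 0) - yd 0 = 0 := by
    rw [ht0, hyd0]
    have := hy_sol 0 ⟨le_rfl, hT.le⟩
    rw [this]
    simp [intervalIntegral.integral_same]
  -- the error recursion
  have hrec : ∀ n, n < N → y (t (n+1)) - yd (n+1)
      = (y (t n) - yd n) + r n + h • (φ (t (n+1)) - b (yd (n+1))) := by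
    intro n hn
    have h1 := hy_sol (t (n+1)) (htmem (n+1) hn)
    have h2 := hy_sol (t n) (htmem n hn.le)
    have hadd : (∫ s in (0:ℝ)..t (n+1), φ s)
        = (∫ s in (0:ℝ)..t n, φ s) + ∫ s in t n..t (n+1), φ s :=
      (intervalIntegral.integral_add_adjacent_intervals
        (hint 0 (t n) le_rfl (htnonneg n) (htle n hn.le))
        (hint (t n) (t (n+1)) (htnonneg n) (htmono n) (htle (n+1) hn))).symm
    have h3 := hstep n hn
    have hx1 : ((n:ℝ) + 1) * h = t (n+1) := by simp only [htdef]; push_cast; ring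
    rw [hx1] at h3
    rw [h1, h2, hadd, hr]
    nth_rewrite 1 [h3]
    simp only [smul_sub]
    abel
  -- one-step inequality
  have hstepineq : ∀ n, n < N → ‖y (t (n+1)) - yd (n+1)‖
      ≤ Real.exp (2*C_b*h) * (‖y (t n) - yd n‖ + ‖r n‖) := by
    intro n hn
    set A := y (t (n+1)) - yd (n+1) with hA
    have hA2 : ⟪A, A⟫ = ‖A‖^2 := real_inner_self_eq_norm_sq A
    have hdecomp := hrec n hn
    have hinner : ⟪A, A⟫ = ⟪A, (y (t n) - yd n) + r n⟫
        + h * ⟪A, φ (t (n+1)) - b (yd (n+1))⟫ := by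
      nth_rewrite 2 [hA]
      rw [hdecomp, inner_add_right, real_inner_smul_right]
    have hw : ⟪A, φ (t (n+1)) - b (yd (n+1))⟫ ≤ C_b * ‖A‖^2 := by
      rw [real_inner_comm]
      exact hb (y (t (n+1))) (yd (n+1))
    have hCS : ⟪A, (y (t n) - yd n) + r n⟫ ≤ ‖A‖ * (‖y (t n) - yd n‖ + ‖r n‖) :=
      le_trans (real_inner_le_norm _ _)
        (mul_le_mul_of_nonneg_left (norm_add_le _ _) (norm_nonneg _))
    have hkey : ‖A‖^2 ≤ ‖A‖ * (‖y (t n) - yd n‖ + ‖r n‖) + (C_b * h) * ‖A‖^2 := by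
      have h4 : h * ⟪A, φ (t (n+1)) - b (yd (n+1))⟫ ≤ h * (C_b * ‖A‖^2) :=
        mul_le_mul_of_nonneg_left hw hhpos.le
      rw [← hA2]
      rw [hinner]
      nlinarith
    have hexp1 : 1 ≤ (1 - C_b*h) * Real.exp (2*(C_b*h)) := by
      have h1 := Real.add_one_le_exp (2*(C_b*h))
      have h2 : 0 ≤ C_b * h := mul_nonneg hCb hhpos.le
      have h3 : 2 * (C_b * h) ≤ 1 := by linarith [hCh]
      nlinarith
    have hE2 : 0 < Real.exp (2*C_b*h) := Real.exp_pos _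
    rcases (norm_nonneg A).eq_or_lt with hA0 | hA0
    · rw [← hA0]
      have : 0 ≤ ‖y (t n) - yd n‖ + ‖r n‖ := by positivity
      positivity
    · have h2 : (1 - C_b*h) * ‖A‖ ≤ ‖y (t n) - yd n‖ + ‖r n‖ := by
        nlinarith [hkey, hA0]
      have hassoc : 2*C_b*h = 2*(C_b*h) := by ring
      calc ‖A‖ = 1 * ‖A‖ := (one_mul _).symm
        _ ≤ ((1 - C_b*h) * Real.exp (2*(C_b*h))) * ‖A‖ :=
            mul_le_mul_of_nonneg_right hexp1 (norm_nonneg _)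
        _ = Real.exp (2*C_b*h) * ((1 - C_b*h) * ‖A‖) := by rw [hassoc]; ring
        _ ≤ Real.exp (2*C_b*h) * (‖y (t n) - yd n‖ + ‖r n‖) :=
            mul_le_mul_of_nonneg_left h2 hE2.le
  -- discrete Gronwall
  have hind : ∀ n : ℕ, n ≤ N → ‖y (t n) - yd n‖
      ≤ Real.exp (2*C_b*h*n) * ∑ i ∈ Finset.range n, ‖r i‖ := by
    intro n
    induction n with
    | zero => intro _; simp [he0]
    | succ n ih =>
      intro hn1
      have hnN : n < N := hn1
      have hih := ih hnN.le
      have hstep2 := hstepineq n hnN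
      have hexpge : (1:ℝ) ≤ Real.exp (2*C_b*h*n) :=
        Real.one_le_exp (by positivity)
      have hsumnn : (0:ℝ) ≤ ∑ i ∈ Finset.range n, ‖r i‖ :=
        Finset.sum_nonneg fun i _ => norm_nonneg _
      calc ‖y (t (n+1)) - yd (n+1)‖
          ≤ Real.exp (2*C_b*h) * (‖y (t n) - yd n‖ + ‖r n‖) := hstep2
        _ ≤ Real.exp (2*C_b*h) * (Real.exp (2*C_b*h*n) * (∑ i ∈ Finset.range n, ‖r i‖)
              + Real.exp (2*C_b*h*n) * ‖r n‖) := by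
            apply mul_le_mul_of_nonneg_left _ (Real.exp_pos _).le
            have h5 : ‖r n‖ ≤ Real.exp (2*C_b*h*n) * ‖r n‖ :=
              le_mul_of_one_le_left (norm_nonneg _) hexpge
            linarith
        _ = Real.exp (2*C_b*h*((n:ℝ)+1)) * ∑ i ∈ Finset.range (n+1), ‖r i‖ := by
            rw [Finset.sum_range_succ,
              show 2*C_b*h*((n:ℝ)+1) = 2*C_b*h*(n:ℝ) + 2*C_b*h by ring, Real.exp_add]
            ring
        _ = Real.exp (2*C_b*h*(((n+1):ℕ):ℝ)) * ∑ i ∈ Finset.range (n+1), ‖r i‖ := by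
            push_cast
            ring_nf
  -- final assembly
  intro n hn
  have hSn : ∑ i ∈ Finset.range n, ‖r i‖ ≤ h * ((N:ℝ) ^ (1 - 1/p) * M) := by
    calc ∑ i ∈ Finset.range n, ‖r i‖
        ≤ ∑ i ∈ Finset.range N, ‖r i‖ :=
          Finset.sum_le_sum_of_subset_of_nonneg (Finset.range_subset_range.2 hn)
            (fun i _ _ => norm_nonneg _)
      _ ≤ ∑ i ∈ Finset.range N, h * ω i :=
          Finset.sum_le_sum fun i hi => hrle i (Finset.mem_range.mp hi)
      _ = h * ∑ i ∈ Finset.range N, ω i := (Finset.mul_sum _ _ _).symm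
      _ ≤ h * ((N:ℝ) ^ (1 - 1/p) * M) := mul_le_mul_of_nonneg_left hsumω hhpos.le
  have hid : h * ((N:ℝ) ^ (1 - 1/p) * M) = T ^ (1-1/p) * M * h ^ (1/p) := by
    have hNT : (N:ℝ) = T / h := by
      rw [eq_div_iff (ne_of_gt hhpos)]
      linarith [hNh]
    rw [hNT, Real.div_rpow hT.le hhpos.le]
    have hhp : h ^ (1/p) * h ^ (1 - 1/p) = h := by
      rw [← Real.rpow_add hhpos, show 1/p + (1 - 1/p) = 1 by ring, Real.rpow_one]
    have hne2 : h ^ (1 - 1/p) ≠ 0 := ne_of_gt (Real.rpow_pos_of_pos hhpos _)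
    have hdiv2 : h / h ^ (1 - 1/p) = h ^ (1/p) := by
      rw [div_eq_iff hne2]; exact hhp.symm
    calc h * ((T ^ (1 - 1/p) / h ^ (1 - 1/p)) * M)
        = (h / h ^ (1 - 1/p)) * T ^ (1 - 1/p) * M := by ring
      _ = T ^ (1 - 1/p) * M * h ^ (1/p) := by rw [hdiv2]; ring
  have hexpb : Real.exp (2*C_b*h*(n:ℝ)) ≤ Real.exp (2*C_b*T) := by
    rw [Real.exp_le_exp]
    have h1 : (n:ℝ) ≤ N := by exact_mod_cast hn
    have h2 : h*(n:ℝ) ≤ T := by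
      rw [← hNh]
      nlinarith
    calc 2*C_b*h*(n:ℝ) = 2*C_b*(h*(n:ℝ)) := by ring
      _ ≤ 2*C_b*T := by nlinarith
  have hsum_nn : (0:ℝ) ≤ ∑ i ∈ Finset.range n, ‖r i‖ :=
    Finset.sum_nonneg fun i _ => norm_nonneg _
  have hfin : ‖y (t n) - yd n‖ ≤ Real.exp (2*C_b*T) * (T ^ (1-1/p) * M * h ^ (1/p)) := by
    calc ‖y (t n) - yd n‖ ≤ Real.exp (2*C_b*h*(n:ℝ)) * ∑ i ∈ Finset.range n, ‖r i‖ :=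
          hind n hn
      _ ≤ Real.exp (2*C_b*T) * (T ^ (1-1/p) * M * h ^ (1/p)) := by
          apply mul_le_mul hexpb (le_trans hSn (le_of_eq hid)) hsum_nn (Real.exp_pos _).le
  have hnn : 0 ≤ T ^ (1-1/p) * Real.exp (2*C_b*T) * M * h ^ (1/p) := by positivity
  show ‖y (t n) - yd n‖ ≤ _
  calc ‖y (t n) - yd n‖ ≤ Real.exp (2*C_b*T) * (T ^ (1-1/p) * M * h ^ (1/p)) := hfin
    _ = T ^ (1-1/p) * Real.exp (2*C_b*T) * M * h ^ (1/p) := by ring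
    _ ≤ 2 * T ^ (1 - 1/p) * Real.exp (2*C_b*T) * M * h ^ (1/p) := by linarith
end

section
/- Let T > 0, p ∈ [1,∞), and let b : ℝ^d → ℝ^d satisfy a one-sided Lipschitz condition with constant C_b and be locally Lipschitz continuous with modulus Υ_b. Let x : [0,T] → ℝ^d be (1/p)-Hölder continuous, ξ ∈ ℝ^d, and let y : [0,T] → ℝ^d be the unique continuous solution of y(t) = ξ + ∫₀ᵗ b(y(s)) ds + x(t) − x(0). Let N ∈ ℕ, h = T/N with 2 C_b h ≤ 1, t_n = n h, and let (y_n)_{0 ≤ n ≤ N} satisfy y_0 = ξ and y_{n+1} = y_n + h b(y_{n+1}) + x(t_{n+1}) − x(t_n). Then max_{0 ≤ n ≤ N} |y(t_n) − y_n| ≤ 2 T e^{2 C_b T} Υ_b(‖y‖_{∞;[0,T]}) ‖y‖_{1/p;[0,T]} h^{1/p}, where ‖y‖_{∞;[0,T]} = sup_t |y(t)| and ‖y‖_{1/p;[0,T]} is the (1/p)-Hölder constant of y. -/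
open scoped RealInnerProductSpace

set_option maxHeartbeats 1600000

/-- Convergence of the implicit Euler scheme, Hölder case:
`max_n ‖y(t_n) - y_n‖ ≤ 2 T e^{2 C_b T} Υ_b(‖y‖_∞) ‖y‖_{1/p} h^{1/p}`,
where `M_y` bounds `‖y‖_{∞;[0,T]}` and `K_y` bounds the `(1/p)`-Hölder
constant of `y`. -/
theorem implicit_euler_rate_holder {d : ℕ} (T : ℝ) (hT : 0 < T)
    (p : ℝ) (hp : 1 ≤ p)
    (b : EuclideanSpace ℝ (Fin d) → EuclideanSpace ℝ (Fin d))
    (C_b : ℝ) (hCb : 0 ≤ C_b)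
    (hb_osl : ∀ ς ζ : EuclideanSpace ℝ (Fin d),
      ⟪b ς - b ζ, ς - ζ⟫ ≤ C_b * ‖ς - ζ‖ ^ 2)
    (Υ : ℝ → ℝ) (hΥ_mono : MonotoneOn Υ (Set.Ici 0))
    (hΥ_nonneg : ∀ r ∈ Set.Ici (0 : ℝ), 0 ≤ Υ r)
    (hb_loclip : ∀ r ∈ Set.Ici (0 : ℝ),
      ∀ ς ∈ Metric.closedBall (0 : EuclideanSpace ℝ (Fin d)) r,
      ∀ ζ ∈ Metric.closedBall (0 : EuclideanSpace ℝ (Fin d)) r,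
        ‖b ς - b ζ‖ ≤ Υ r * ‖ς - ζ‖)
    (x : ℝ → EuclideanSpace ℝ (Fin d))
    (K_x : ℝ) (hx_hold : ∀ s ∈ Set.Icc (0 : ℝ) T, ∀ t ∈ Set.Icc (0 : ℝ) T,
      ‖x t - x s‖ ≤ K_x * |t - s| ^ (1 / p))
    (ξ : EuclideanSpace ℝ (Fin d))
    (y : ℝ → EuclideanSpace ℝ (Fin d)) (hy_cont : ContinuousOn y (Set.Icc 0 T))
    (hy_sol : ∀ t ∈ Set.Icc (0 : ℝ) T,
      y t = ξ + (∫ s in (0 : ℝ)..t, b (y s)) + x t - x 0)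
    (M_y : ℝ) (hMy0 : 0 ≤ M_y) (hMy : ∀ t ∈ Set.Icc (0 : ℝ) T, ‖y t‖ ≤ M_y)
    (K_y : ℝ) (hKy0 : 0 ≤ K_y)
    (hy_hold : ∀ s ∈ Set.Icc (0 : ℝ) T, ∀ t ∈ Set.Icc (0 : ℝ) T,
      ‖y t - y s‖ ≤ K_y * |t - s| ^ (1 / p))
    (N : ℕ) (hN : 1 ≤ N) (h : ℝ) (hh : h = T / N) (hCh : 2 * C_b * h ≤ 1)
    (yd : ℕ → EuclideanSpace ℝ (Fin d)) (hyd0 : yd 0 = ξ)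
    (hstep : ∀ n < N,
      yd (n + 1) = yd n + h • b (yd (n + 1)) + x ((n + 1) * h) - x (n * h)) :
    ∀ n ≤ N, ‖y (n * h) - yd n‖ ≤
      2 * T * Real.exp (2 * C_b * T) * Υ M_y * K_y * h ^ (1 / p) := by
  -- basic positivity facts
  have hN0 : (0:ℝ) < (N:ℝ) := by exact_mod_cast Nat.pos_of_ne_zero (by omega)
  have hh0 : 0 < h := by rw [hh]; positivity
  have hNh : (N:ℝ) * h = T := by rw [hh]; field_simp
  have hp0 : (0:ℝ) < 1/p := by positivity
  have hc0 : 0 ≤ C_b * h := mul_nonneg hCb hh0.le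
  have hc1 : C_b * h ≤ 1/2 := by nlinarith
  have h1c : (0:ℝ) < 1 - C_b * h := by linarith
  set c : ℝ := C_b * h with hc
  set a : ℝ := (1 - c)⁻¹ with ha
  have ha' : (1 - c) * a = 1 := mul_inv_cancel₀ h1c.ne'
  have ha1 : 1 ≤ a := by nlinarith
  have ha0 : 0 ≤ a := by linarith
  have hae : a ≤ Real.exp (2*c) := by
    have he := Real.add_one_le_exp (2*c)
    nlinarith
  have haN : a^N ≤ Real.exp (2*C_b*T) := by
    calc a^N ≤ (Real.exp (2*c))^N := pow_le_pow_left₀ ha0 hae N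
    _ = Real.exp ((N:ℝ) * (2*c)) := (Real.exp_nat_mul _ N).symm
    _ = Real.exp (2*C_b*T) := by rw [← hNh, hc]; ring_nf
  have hΥM0 : 0 ≤ Υ M_y := hΥ_nonneg M_y hMy0
  set D : ℝ := Υ M_y * K_y * h ^ (1/p) * h with hD
  have hD0 : 0 ≤ D :=
    mul_nonneg (mul_nonneg (mul_nonneg hΥM0 hKy0) (Real.rpow_nonneg hh0.le _)) hh0.le
  -- continuity and integrability of b ∘ y
  have hlip : LipschitzOnWith (Real.toNNReal (Υ M_y)) b (Metric.closedBall 0 M_y) := by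
    rw [lipschitzOnWith_iff_dist_le_mul]
    intro ς hς ζ hζ
    rw [dist_eq_norm, dist_eq_norm, Real.coe_toNNReal _ hΥM0]
    exact hb_loclip M_y hMy0 ς hς ζ hζ
  have hmaps : Set.MapsTo y (Set.Icc 0 T) (Metric.closedBall 0 M_y) := by
    intro t ht
    simpa [Metric.mem_closedBall, dist_zero_right] using hMy t ht
  have hby : ContinuousOn (fun s => b (y s)) (Set.Icc 0 T) :=
    hlip.continuousOn.comp hy_cont hmaps
  have hint : ∀ s ∈ Set.Icc (0:ℝ) T, ∀ t ∈ Set.Icc (0:ℝ) T,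
      IntervalIntegrable (fun s => b (y s)) MeasureTheory.volume s t := by
    intro s hs t ht
    exact (hby.mono (Set.uIcc_subset_Icc hs ht)).intervalIntegrable
  have hmem : ∀ n : ℕ, n ≤ N → (n:ℝ)*h ∈ Set.Icc 0 T := by
    intro n hn
    constructor
    · positivity
    · calc (n:ℝ)*h ≤ (N:ℝ)*h := by
            have : (n:ℝ) ≤ (N:ℝ) := by exact_mod_cast hn
            nlinarith
      _ = T := hNh
  have hy0 : y 0 = ξ := by
    have h0 := hy_sol 0 ⟨le_refl 0, hT.le⟩
    simpa using h0
  -- the one-step recurrence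
  have hrec : ∀ n : ℕ, n < N →
      ‖y (((n:ℝ)+1)*h) - yd (n+1)‖ ≤ a * (‖y ((n:ℝ)*h) - yd n‖ + D) := by
    intro n hn
    set tn : ℝ := (n:ℝ)*h with htn
    set tn1 : ℝ := ((n:ℝ)+1)*h with htn1
    have htn1n : tn1 = ((n+1 : ℕ):ℝ)*h := by push_cast [htn1]; ring
    have hmn : tn ∈ Set.Icc 0 T := hmem n hn.le
    have hmn1 : tn1 ∈ Set.Icc 0 T := by rw [htn1n]; exact hmem (n+1) hn
    have hdt : tn1 - tn = h := by rw [htn1, htn]; ring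
    set u := y tn1 - yd (n+1) with hu
    set v := y tn - yd n with hv
    have hi1 : IntervalIntegrable (fun s => b (y s)) MeasureTheory.volume 0 tn :=
      hint 0 ⟨le_refl 0, hT.le⟩ tn hmn
    have hi2 : IntervalIntegrable (fun s => b (y s)) MeasureTheory.volume tn tn1 :=
      hint tn hmn tn1 hmn1
    have hsplit : ∫ s in (0:ℝ)..tn1, b (y s) =
        (∫ s in (0:ℝ)..tn, b (y s)) + ∫ s in tn..tn1, b (y s) :=
      (intervalIntegral.integral_add_adjacent_intervals hi1 hi2).symm
    set δ := ∫ s in tn..tn1, (b (y s) - b (y tn1)) with hδdef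
    have hδeq : ∫ s in tn..tn1, b (y s) = δ + h • b (y tn1) := by
      rw [hδdef, intervalIntegral.integral_sub hi2 intervalIntegrable_const,
        intervalIntegral.integral_const, hdt]
      abel
    have hyd : yd (n+1) = yd n + h • b (yd (n+1)) + x tn1 - x tn := hstep n hn
    have hA : y tn1 - y tn = (∫ s in tn..tn1, b (y s)) + (x tn1 - x tn) := by
      rw [hy_sol tn1 hmn1, hy_sol tn hmn, hsplit]
      abel
    rw [hδeq] at hA
    have hB : yd (n+1) - yd n = h • b (yd (n+1)) + (x tn1 - x tn) := by
      nth_rewrite 1 [hyd]; abel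
    have hkey : u = v + h • (b (y tn1) - b (yd (n+1))) + δ := by
      calc u = (y tn1 - y tn) - (yd (n+1) - yd n) + v := by rw [hu, hv]; abel
      _ = (δ + h • b (y tn1) + (x tn1 - x tn))
            - (h • b (yd (n+1)) + (x tn1 - x tn)) + v := by rw [hA, hB]
      _ = v + h • (b (y tn1) - b (yd (n+1))) + δ := by rw [smul_sub]; abel
    -- bound on the integral remainder δ
    have hδD : ‖δ‖ ≤ D := by
      have hb1 : ∀ s ∈ Set.uIoc tn tn1, ‖b (y s) - b (y tn1)‖ ≤ Υ M_y * (K_y * h^(1/p)) := by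
        intro s hs
        rw [Set.uIoc_of_le (by linarith)] at hs
        have hsI : s ∈ Set.Icc 0 T :=
          ⟨le_trans hmn.1 hs.1.le, le_trans hs.2 hmn1.2⟩
        have h1 : ‖b (y s) - b (y tn1)‖ ≤ Υ M_y * ‖y s - y tn1‖ :=
          hb_loclip M_y hMy0 _ (hmaps hsI) _ (hmaps hmn1)
        have h2 : ‖y s - y tn1‖ ≤ K_y * |s - tn1| ^ (1/p) :=
          hy_hold tn1 hmn1 s hsI
        have h3 : |s - tn1| ≤ h := by
          rw [abs_sub_comm, abs_of_nonneg (by linarith [hs.2])]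
          linarith [hs.1, hdt]
        have h4 : |s - tn1| ^ (1/p) ≤ h ^ (1/p) :=
          Real.rpow_le_rpow (abs_nonneg _) h3 hp0.le
        calc ‖b (y s) - b (y tn1)‖ ≤ Υ M_y * ‖y s - y tn1‖ := h1
        _ ≤ Υ M_y * (K_y * |s - tn1| ^ (1/p)) := by
            exact mul_le_mul_of_nonneg_left h2 hΥM0
        _ ≤ Υ M_y * (K_y * h ^ (1/p)) := by
            exact mul_le_mul_of_nonneg_left (mul_le_mul_of_nonneg_left h4 hKy0) hΥM0
      calc ‖δ‖ ≤ (Υ M_y * (K_y * h^(1/p))) * |tn1 - tn| :=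
            intervalIntegral.norm_integral_le_of_norm_le_const hb1
      _ = D := by rw [hdt, abs_of_pos hh0, hD]; ring
    -- inner-product estimate
    have hosl : ⟪b (y tn1) - b (yd (n+1)), u⟫ ≤ C_b * ‖u‖^2 := by
      rw [hu]; exact hb_osl _ _
    have hin : ‖u‖^2 = ⟪v,u⟫ + h * ⟪b (y tn1) - b (yd (n+1)), u⟫ + ⟪δ,u⟫ := by
      rw [← real_inner_self_eq_norm_sq u]
      nth_rewrite 1 [hkey]
      rw [inner_add_left, inner_add_left, real_inner_smul_left]
    have hCS1 := real_inner_le_norm v u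
    have hCS2 := real_inner_le_norm δ u
    have hoslh : h * ⟪b (y tn1) - b (yd (n+1)), u⟫ ≤ h * (C_b * ‖u‖^2) :=
      mul_le_mul_of_nonneg_left hosl hh0.le
    have hquad : ‖u‖^2 ≤ (‖v‖ + ‖δ‖)*‖u‖ + c*‖u‖^2 := by
      have h5 : h * (C_b * ‖u‖^2) = c * ‖u‖^2 := by rw [hc]; ring
      nlinarith [hin, hCS1, hCS2, hoslh]
    rcases eq_or_lt_of_le (norm_nonneg u) with h0 | h0
    · rw [← h0]
      exact mul_nonneg ha0 (add_nonneg (norm_nonneg v) hD0)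
    · have h6 : (1-c)*‖u‖ ≤ ‖v‖ + D := by
        nlinarith [hquad, mul_le_mul_of_nonneg_right hδD (norm_nonneg u)]
      calc ‖u‖ = a * ((1-c)*‖u‖) := by
            rw [ha]; field_simp
      _ ≤ a*(‖v‖+D) := mul_le_mul_of_nonneg_left h6 ha0
  -- induction
  have main : ∀ n : ℕ, n ≤ N → ‖y ((n:ℝ)*h) - yd n‖ ≤ (n:ℝ) * a^n * D := by
    intro n
    induction n with
    | zero => intro _; simp [hy0, hyd0]
    | succ k ih =>
      intro hk
      have hk' : k < N := Nat.lt_of_succ_le hk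
      have h1 := hrec k hk'
      have h2 := ih hk'.le
      have hpow : a^1 ≤ a^(k+1) := pow_le_pow_right₀ ha1 (by omega)
      have hpk : 0 ≤ a^k := pow_nonneg ha0 k
      calc ‖y ((↑(k+1):ℝ)*h) - yd (k+1)‖ = ‖y (((k:ℝ)+1)*h) - yd (k+1)‖ := by push_cast; ring_nf
      _ ≤ a*(‖y ((k:ℝ)*h) - yd k‖ + D) := h1
      _ ≤ a*((k:ℝ)*a^k*D + D) := mul_le_mul_of_nonneg_left (by linarith) ha0
      _ ≤ (↑(k+1):ℝ)*a^(k+1)*D := by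
        push_cast
        simp only [pow_succ, pow_one] at hpow ⊢
        nlinarith [mul_le_mul_of_nonneg_right hpow hD0, mul_nonneg (mul_nonneg hpk ha0) hD0]
  intro n hn
  have hfin := main n hn
  have h7 : a^n ≤ Real.exp (2*C_b*T) :=
    le_trans (pow_le_pow_right₀ ha1 hn) haN
  have h8 : (n:ℝ)*a^n*D ≤ (N:ℝ) * Real.exp (2*C_b*T) * D := by
    have hnN : (n:ℝ) ≤ (N:ℝ) := by exact_mod_cast hn
    have := mul_le_mul hnN h7 (pow_nonneg ha0 n) hN0.le
    exact mul_le_mul_of_nonneg_right (by nlinarith [pow_nonneg ha0 n]) hD0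
  have h9 : (N:ℝ) * Real.exp (2*C_b*T) * D =
      T * Real.exp (2*C_b*T) * Υ M_y * K_y * h ^ (1/p) := by
    rw [hD, ← hNh]; ring
  have h10 : 0 ≤ T * Real.exp (2*C_b*T) * Υ M_y * K_y * h ^ (1/p) := by
    have := Real.exp_pos (2*C_b*T)
    positivity
  linarith [hfin, h8, h9.le]
end

section
/- Let T > 0 and let x : [0,T] → ℝ^m, 𝕏² : [0,T]² → ℝ^m ⊗ ℝ^m, 𝕏³ : [0,T]² → (ℝ^m)^{⊗3} satisfy the Chen relations: 𝕏²_{s,t} − 𝕏²_{s,u} − 𝕏²_{u,t} = x_{s,u} ⊗ x_{u,t} and 𝕏³_{s,t} − 𝕏³_{s,u} − 𝕏³_{u,t} = 𝕏²_{s,u} ⊗ x_{u,t} + x_{s,u} ⊗ 𝕏²_{u,t} for all s, u, t ∈ [0,T], where x_{s,t} := x(t) − x(s). Let W be a finite-dimensional normed space and let ŷ : [0,T] → L(ℝ^m, W), ŷ⁽¹⁾ : [0,T] → L(ℝ^m ⊗ ℝ^m, W), ŷ⁽²⁾ : [0,T] → L((ℝ^m)^{⊗3}, W) be maps, and define the remainders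 R³_{s,t} := ŷ(t) − ŷ(s) − ŷ⁽¹⁾(s)(x_{s,t} ⊗ ·) − ŷ⁽²⁾(s)(𝕏²_{s,t} ⊗ ·) and R²_{s,t} := ŷ⁽¹⁾(t) − ŷ⁽¹⁾(s) − ŷ⁽²⁾(s)(x_{s,t} ⊗ ·) (viewed via the canonical identifications L(ℝ^m⊗ℝ^m,W) ≅ L(ℝ^m, L(ℝ^m,W)) and L((ℝ^m)^{⊗3},W) ≅ L(ℝ^m, L(ℝ^m⊗ℝ^m,W))). Set J_{s,t} := ŷ(s)x_{s,t} + ŷ⁽¹⁾(s)𝕏²_{s,t} + ŷ⁽²⁾(s)𝕏³_{s,t} ∈ W. Then for all s ≤ u ≤ t in [0,T], J_{s,t} − J_{s,u} − J_{u,t} = −R³_{s,u} x_{u,t} − R²_{s,u} 𝕏²_{u,t} + (ŷ⁽²⁾(s) − ŷ⁽²⁾(u)) 𝕏³_{u,t}. -/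
open scoped TensorProduct

/-- Coherence (additivity defect) identity for the local approximation
`J_{s,t} = ŷ(s) x_{s,t} + ŷ⁽¹⁾(s) 𝕏²_{s,t} + ŷ⁽²⁾(s) 𝕏³_{s,t}` of a path
controlled by a rough path `(x, 𝕏², 𝕏³)` with second-order Gubinelli
derivatives, used in the sewing construction of the rough integral. -/
theorem sewing_coherence_second_order {m : ℕ} (T : ℝ) (hT : 0 < T)
    (W : Type*) [NormedAddCommGroup W] [NormedSpace ℝ W] [FiniteDimensional ℝ W]
    (x : ℝ → EuclideanSpace ℝ (Fin m))
    (X2 : ℝ → ℝ → EuclideanSpace ℝ (Fin m) ⊗[ℝ] EuclideanSpace ℝ (Fin m))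
    (X3 : ℝ → ℝ → EuclideanSpace ℝ (Fin m) ⊗[ℝ]
      (EuclideanSpace ℝ (Fin m) ⊗[ℝ] EuclideanSpace ℝ (Fin m)))
    (chen2 : ∀ s ∈ Set.Icc (0 : ℝ) T, ∀ u ∈ Set.Icc (0 : ℝ) T,
      ∀ t ∈ Set.Icc (0 : ℝ) T,
      X2 s t - X2 s u - X2 u t = (x u - x s) ⊗ₜ[ℝ] (x t - x u))
    (chen3 : ∀ s ∈ Set.Icc (0 : ℝ) T, ∀ u ∈ Set.Icc (0 : ℝ) T,
      ∀ t ∈ Set.Icc (0 : ℝ) T,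
      X3 s t - X3 s u - X3 u t =
        (TensorProduct.assoc ℝ (EuclideanSpace ℝ (Fin m))
            (EuclideanSpace ℝ (Fin m)) (EuclideanSpace ℝ (Fin m)))
          (X2 s u ⊗ₜ[ℝ] (x t - x u)) + (x u - x s) ⊗ₜ[ℝ] X2 u t)
    (yhat : ℝ → (EuclideanSpace ℝ (Fin m) →ₗ[ℝ] W))
    (y1 : ℝ → (EuclideanSpace ℝ (Fin m) ⊗[ℝ] EuclideanSpace ℝ (Fin m) →ₗ[ℝ] W))
    (y2 : ℝ → (EuclideanSpace ℝ (Fin m) ⊗[ℝ]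
      (EuclideanSpace ℝ (Fin m) ⊗[ℝ] EuclideanSpace ℝ (Fin m)) →ₗ[ℝ] W))
    (R3 : ℝ → ℝ → EuclideanSpace ℝ (Fin m) → W)
    (hR3 : ∀ s t v, R3 s t v =
      yhat t v - yhat s v - y1 s ((x t - x s) ⊗ₜ[ℝ] v) -
        y2 s ((TensorProduct.assoc ℝ (EuclideanSpace ℝ (Fin m))
            (EuclideanSpace ℝ (Fin m)) (EuclideanSpace ℝ (Fin m)))
          (X2 s t ⊗ₜ[ℝ] v)))
    (R2 : ℝ → ℝ →
      EuclideanSpace ℝ (Fin m) ⊗[ℝ] EuclideanSpace ℝ (Fin m) → W)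
    (hR2 : ∀ s t w, R2 s t w =
      y1 t w - y1 s w - y2 s ((x t - x s) ⊗ₜ[ℝ] w))
    (J : ℝ → ℝ → W)
    (hJ : ∀ s t, J s t = yhat s (x t - x s) + y1 s (X2 s t) + y2 s (X3 s t)) :
    ∀ s ∈ Set.Icc (0 : ℝ) T, ∀ u ∈ Set.Icc (0 : ℝ) T, ∀ t ∈ Set.Icc (0 : ℝ) T,
      s ≤ u → u ≤ t →
      J s t - J s u - J u t =
        -R3 s u (x t - x u) - R2 s u (X2 u t) + (y2 s - y2 u) (X3 u t) := by
  intro s hs u hu t ht _ _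
  have h2 := chen2 s hs u hu t ht
  have h3 := chen3 s hs u hu t ht
  have h2' : X2 s t = X2 s u + X2 u t + (x u - x s) ⊗ₜ[ℝ] (x t - x u) := by
    linear_combination (norm := abel) h2
  have h3' : X3 s t = X3 s u + X3 u t +
      ((TensorProduct.assoc ℝ (EuclideanSpace ℝ (Fin m))
          (EuclideanSpace ℝ (Fin m)) (EuclideanSpace ℝ (Fin m)))
        (X2 s u ⊗ₜ[ℝ] (x t - x u)) + (x u - x s) ⊗ₜ[ℝ] X2 u t) := by
    linear_combination (norm := abel) h3
  simp only [hJ, hR3, hR2, h2', h3', map_add, map_sub, LinearMap.sub_apply]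
  abel
end
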